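/- arXiv:0910.1824 — 6 statements merged into one kernel-verified Lean document; each statement's English description precedes it below -/
import Mathlib

section
/- Let G be a finite graph with vertex set X, let {μ_x}_{x∈X} be nonnegative reals, and define R*_x = μ_x/φ*_x(μ), R̄_x = 1 - (1/(1+μ_x))^{1/φ̃*_x(μ)}, R̃*_x = μ_x/((1+μ_x)·φ̃*_x(μ)), and R_x = μ_x/Π_{y∈Γ*_G(x)}(1+μ_y). Then R*_x ≥ R̄_x ≥ R̃*_x ≥ R_x for every x ∈ X. -/
open Finset
open scoped Classical BigOperators

/-- φ*_x(μ): sum over independent subsets of the closed neighborhood of x. -/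
noncomputable def phiStar {X : Type*} [Fintype X] [DecidableEq X] (G : SimpleGraph X)
    (μ : X → ℝ) (x : X) : ℝ :=
  ∑ R ∈ ((insert x (G.neighborFinset x)).powerset.filter
      (fun R => ∀ a ∈ R, ∀ b ∈ R, ¬ G.Adj a b)), ∏ y ∈ R, μ y

/-- φ̃*_x(μ): sum over independent subsets of the open neighborhood of x. -/
noncomputable def phiTilde {X : Type*} [Fintype X] [DecidableEq X] (G : SimpleGraph X)
    (μ : X → ℝ) (x : X) : ℝ :=
  ∑ R ∈ ((G.neighborFinset x).powerset.filter
      (fun R => ∀ a ∈ R, ∀ b ∈ R, ¬ G.Adj a b)), ∏ y ∈ R, μ y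

lemma phiTilde_ge_one {X : Type*} [Fintype X] [DecidableEq X] (G : SimpleGraph X)
    (μ : X → ℝ) (hμ : ∀ x, 0 ≤ μ x) (x : X) : 1 ≤ phiTilde G μ x := by
  have hmem : (∅ : Finset X) ∈ ((G.neighborFinset x).powerset.filter
      (fun R => ∀ a ∈ R, ∀ b ∈ R, ¬ G.Adj a b)) := by simp
  have := Finset.single_le_sum (f := fun R : Finset X => ∏ y ∈ R, μ y)
    (fun R _ => Finset.prod_nonneg fun y _ => hμ y) hmem
  simpa [phiTilde] using this

lemma phiStar_eq {X : Type*} [Fintype X] [DecidableEq X] (G : SimpleGraph X)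
    (μ : X → ℝ) (x : X) : phiStar G μ x = phiTilde G μ x + μ x := by
  classical
  have hx : x ∉ G.neighborFinset x := by simp
  have hset : ((insert x (G.neighborFinset x)).powerset.filter
      (fun R => ∀ a ∈ R, ∀ b ∈ R, ¬ G.Adj a b)) =
      ((G.neighborFinset x).powerset.filter
      (fun R => ∀ a ∈ R, ∀ b ∈ R, ¬ G.Adj a b)) ∪ {({x} : Finset X)} := by
    ext R
    simp only [Finset.mem_filter, Finset.mem_powerset, Finset.mem_union,
      Finset.mem_singleton]
    constructor
    · rintro ⟨hsub, hind⟩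
      by_cases hxR : x ∈ R
      · right
        apply Finset.eq_singleton_iff_unique_mem.2 ⟨hxR, ?_⟩
        intro y hy
        by_contra hne
        have hyN : y ∈ G.neighborFinset x := by
          have := hsub hy
          simp only [Finset.mem_insert] at this
          tauto
        exact hind x hxR y hy (by simpa using hyN)
      · left
        refine ⟨fun y hy => ?_, hind⟩
        have := hsub hy
        simp only [Finset.mem_insert] at this
        rcases this with rfl | h
        · exact absurd hy hxR
        · exact h
    · rintro (⟨hsub, hind⟩ | rfl)
      · exact ⟨hsub.trans (Finset.subset_insert _ _), hind⟩
      · refine ⟨by simp, ?_⟩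
        intro a ha b hb
        simp only [Finset.mem_singleton] at ha hb
        subst ha; subst hb; simp
  have hdisj : Disjoint ((G.neighborFinset x).powerset.filter
      (fun R => ∀ a ∈ R, ∀ b ∈ R, ¬ G.Adj a b)) ({({x} : Finset X)}) := by
    simp only [Finset.disjoint_singleton_right, Finset.mem_filter, Finset.mem_powerset]
    rintro ⟨hsub, -⟩
    exact hx (hsub (by simp))
  rw [phiStar, hset, Finset.sum_union hdisj, phiTilde]
  simp

lemma phiTilde_le_prod {X : Type*} [Fintype X] [DecidableEq X] (G : SimpleGraph X)
    (μ : X → ℝ) (hμ : ∀ x, 0 ≤ μ x) (x : X) :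
    phiTilde G μ x ≤ ∏ y ∈ G.neighborFinset x, (1 + μ y) := by
  classical
  have hexp : ∏ y ∈ G.neighborFinset x, (1 + μ y)
      = ∑ R ∈ (G.neighborFinset x).powerset, ∏ y ∈ R, μ y := by
    have := Finset.prod_add (μ) (fun _ => (1:ℝ)) (G.neighborFinset x)
    simp only [Finset.prod_const_one, mul_one] at this
    calc ∏ y ∈ G.neighborFinset x, (1 + μ y)
        = ∏ y ∈ G.neighborFinset x, (μ y + 1) := by
          apply Finset.prod_congr rfl; intros; ring
      _ = _ := this
  rw [hexp, phiTilde]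
  apply Finset.sum_le_sum_of_subset_of_nonneg (Finset.filter_subset _ _)
  intro R _ _
  exact Finset.prod_nonneg fun y _ => hμ y

theorem radii_chain {X : Type*} [Fintype X] [DecidableEq X] (G : SimpleGraph X)
    (μ : X → ℝ) (hμ : ∀ x, 0 ≤ μ x) (x : X) :
    let Rstar := μ x / phiStar G μ x
    let Rbar := 1 - (1 / (1 + μ x)) ^ ((1 : ℝ) / phiTilde G μ x)
    let Rtilde := μ x / ((1 + μ x) * phiTilde G μ x)
    let Rlov := μ x / ∏ y ∈ insert x (G.neighborFinset x), (1 + μ y)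
    Rbar ≤ Rstar ∧ Rtilde ≤ Rbar ∧ Rlov ≤ Rtilde := by
  intro Rstar Rbar Rtilde Rlov
  set m := μ x with hm_def
  have hm : 0 ≤ m := hμ x
  have h1m : (0:ℝ) < 1 + m := by linarith
  set t := phiTilde G μ x with ht_def
  have ht1 : (1:ℝ) ≤ t := phiTilde_ge_one G μ hμ x
  have ht0 : (0:ℝ) < t := by linarith
  set α : ℝ := 1 / t with hα_def
  have hα0 : 0 < α := by positivity
  have hα1 : α ≤ 1 := by
    rw [hα_def]; rw [div_le_one ht0]; exact ht1
  -- rewrite (1/(1+m))^α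
  have hbase : (1 / (1 + m)) ^ α = ((1 + m) ^ α)⁻¹ := by
    rw [one_div, Real.inv_rpow h1m.le]
  have hpow_pos : (0:ℝ) < (1 + m) ^ α := Real.rpow_pos_of_pos h1m α
  constructor
  · -- Rbar ≤ Rstar
    have hBern : (1 + m) ^ α ≤ 1 + α * m :=
      rpow_one_add_le_one_add_mul_self (by linarith) hα0.le hα1
    have h1 : 1 + α * m = (t + m) / t := by
      field_simp [hα_def]
      rw [hα_def, div_mul_eq_mul_div, one_mul, add_mul, one_mul, div_mul_cancel₀ _ ht0.ne']
    have htm : (0:ℝ) < t + m := by linarith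
    have hinv : t / (t + m) ≤ ((1 + m) ^ α)⁻¹ := by
      rw [le_inv_comm₀ (by positivity) hpow_pos]
      calc (1 + m) ^ α ≤ (t + m) / t := h1 ▸ hBern
        _ = (t / (t + m))⁻¹ := by
            rw [inv_div]
    have hRstar : Rstar = m / (t + m) := by
      simp only [Rstar, phiStar_eq G μ x, ← ht_def, ← hm_def]
    rw [hRstar]
    show 1 - (1 / (1 + m)) ^ α ≤ m / (t + m)
    rw [hbase]
    have : 1 - m / (t + m) = t / (t + m) := by field_simp; ring
    linarith [hinv, this]
  constructor
  · -- Rtilde ≤ Rbar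
    have hs : -(1:ℝ) ≤ -(m / (1 + m)) := by
      rw [neg_le_neg_iff]
      rw [div_le_one h1m]; linarith
    have hBern : (1 + -(m / (1 + m))) ^ α ≤ 1 + α * -(m / (1 + m)) :=
      rpow_one_add_le_one_add_mul_self hs hα0.le hα1
    have heq : 1 + -(m / (1 + m)) = 1 / (1 + m) := by field_simp; ring
    have heq2 : α * (m / (1 + m)) = m / ((1 + m) * t) := by
      rw [hα_def, div_mul_div_comm, one_mul, mul_comm t (1 + m)]
    rw [heq] at hBern
    show m / ((1 + m) * t) ≤ 1 - (1 / (1 + m)) ^ α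
    linarith [hBern, heq2]
  · -- Rlov ≤ Rtilde
    have hx : x ∉ G.neighborFinset x := by simp
    have hprod : ∏ y ∈ insert x (G.neighborFinset x), (1 + μ y)
        = (1 + m) * ∏ y ∈ G.neighborFinset x, (1 + μ y) := by
      rw [Finset.prod_insert hx]
    have hle : t ≤ ∏ y ∈ G.neighborFinset x, (1 + μ y) :=
      phiTilde_le_prod G μ hμ x
    show m / ∏ y ∈ insert x (G.neighborFinset x), (1 + μ y) ≤ m / ((1 + m) * t)
    rw [hprod]
    apply div_le_div_of_nonneg_left hm (by positivity)
    exact mul_le_mul_of_nonneg_left hle h1m.le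
end

section
/- Let G be a finite graph with vertex set X, {p_x}_{x∈X} probabilities, and S ⊆ X. Define P(S) = Σ_{U: S ⊆ U ⊆ X, U independent in G} (-1)^{|U|-|S|} Π_{x∈U} p_x. If S itself is independent in G, then P(S) = Z_G(-p_S) · Π_{y∈S} p_y, where p^S_x = 0 if x ∈ S ∪ Γ_G(S) and p^S_x = p_x otherwise, and Z_G(w) = Σ_{R ⊆ X, R independent} Π_{x∈R} w_x. -/
open Finset
open scoped Classical BigOperators

/-- Hard-core partition function with real weights. -/
noncomputable def hardCoreZ {X : Type*} [Fintype X] [DecidableEq X] (G : SimpleGraph X)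
    (w : X → ℝ) : ℝ :=
  ∑ R ∈ (Finset.univ : Finset (Finset X)).filter
      (fun R => ∀ a ∈ R, ∀ b ∈ R, ¬ G.Adj a b), ∏ x ∈ R, w x

/-- Shearer's quantity P(S). -/
noncomputable def shearerP {X : Type*} [Fintype X] [DecidableEq X] (G : SimpleGraph X)
    (p : X → ℝ) (S : Finset X) : ℝ :=
  ∑ U ∈ (Finset.univ : Finset (Finset X)).filter
      (fun U => S ⊆ U ∧ ∀ a ∈ U, ∀ b ∈ U, ¬ G.Adj a b),
    (-1 : ℝ) ^ (U.card - S.card) * ∏ x ∈ U, p x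

theorem shearerP_eq_Z {X : Type*} [Fintype X] [DecidableEq X] (G : SimpleGraph X)
    (p : X → ℝ) (hp : ∀ x, 0 ≤ p x ∧ p x ≤ 1) (S : Finset X)
    (hS : ∀ a ∈ S, ∀ b ∈ S, ¬ G.Adj a b) :
    shearerP G p S =
      hardCoreZ G (fun x =>
        if x ∈ S ∨ ∃ y ∈ S, G.Adj x y then 0 else -(p x)) * ∏ y ∈ S, p y := by
  classical
  set w : X → ℝ := fun x => if x ∈ S ∨ ∃ y ∈ S, G.Adj x y then 0 else -(p x) with hw
  -- restrict the Z sum to R avoiding S and its neighborhood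
  have hZ : hardCoreZ G w =
      ∑ R ∈ (Finset.univ : Finset (Finset X)).filter
        (fun R => (∀ a ∈ R, ∀ b ∈ R, ¬ G.Adj a b) ∧
          ∀ x ∈ R, ¬ (x ∈ S ∨ ∃ y ∈ S, G.Adj x y)),
        ∏ x ∈ R, w x := by
    rw [hardCoreZ]
    refine (Finset.sum_subset ?_ ?_).symm
    · intro R hR
      simp only [Finset.mem_filter] at hR ⊢
      exact ⟨hR.1, hR.2.1⟩
    · intro R hR hR'
      simp only [Finset.mem_filter, Finset.mem_univ, true_and] at hR hR'
      push_neg at hR'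
      obtain ⟨x, hx, hbad⟩ := hR' hR
      refine Finset.prod_eq_zero hx ?_
      simp [hw, hbad]
  rw [hZ, shearerP, Finset.sum_mul]
  refine Finset.sum_bij' (fun U _ => U \ S) (fun R _ => S ∪ R) ?_ ?_ ?_ ?_ ?_
  · intro U hU
    simp only [Finset.mem_filter, Finset.mem_univ, true_and] at hU ⊢
    obtain ⟨hSU, hind⟩ := hU
    refine ⟨fun a ha b hb => hind a (Finset.mem_sdiff.mp ha).1 b (Finset.mem_sdiff.mp hb).1,
      ?_⟩
    intro x hx
    obtain ⟨hxU, hxS⟩ := Finset.mem_sdiff.mp hx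
    rintro (h | ⟨y, hy, hadj⟩)
    · exact hxS h
    · exact hind x hxU y (hSU hy) hadj
  · intro R hR
    simp only [Finset.mem_filter, Finset.mem_univ, true_and] at hR ⊢
    obtain ⟨hind, hgood⟩ := hR
    refine ⟨Finset.subset_union_left, ?_⟩
    intro a ha b hb hadj
    rcases Finset.mem_union.mp ha with haS | haR <;>
      rcases Finset.mem_union.mp hb with hbS | hbR
    · exact hS a haS b hbS hadj
    · exact hgood b hbR (Or.inr ⟨a, haS, hadj.symm⟩)
    · exact hgood a haR (Or.inr ⟨b, hbS, hadj⟩)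
    · exact hind a haR b hbR hadj
  · intro U hU
    simp only [Finset.mem_filter, Finset.mem_univ, true_and] at hU
    exact Finset.union_sdiff_of_subset hU.1
  · intro R hR
    simp only [Finset.mem_filter, Finset.mem_univ, true_and] at hR
    have hdisj : Disjoint S R := by
      rw [Finset.disjoint_right]
      intro x hxR hxS
      exact hR.2 x hxR (Or.inl hxS)
    exact Finset.union_sdiff_cancel_left hdisj
  · intro U hU
    simp only [Finset.mem_filter, Finset.mem_univ, true_and] at hU
    obtain ⟨hSU, hind⟩ := hU
    have hgood : ∀ x ∈ U \ S, ¬ (x ∈ S ∨ ∃ y ∈ S, G.Adj x y) := by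
      intro x hx
      obtain ⟨hxU, hxS⟩ := Finset.mem_sdiff.mp hx
      rintro (h | ⟨y, hy, hadj⟩)
      · exact hxS h
      · exact hind x hxU y (hSU hy) hadj
    have h1 : ∏ x ∈ U \ S, w x = ∏ x ∈ U \ S, -(p x) :=
      Finset.prod_congr rfl fun x hx => by simp [hw, hgood x hx]
    have h2 : ∏ x ∈ U, p x = (∏ x ∈ U \ S, p x) * ∏ y ∈ S, p y := by
      rw [← Finset.prod_sdiff hSU]
    have h3 : (U \ S).card = U.card - S.card := Finset.card_sdiff_of_subset hSU
    have h4 : ∏ x ∈ U \ S, -(p x) = (-1 : ℝ) ^ (U \ S).card * ∏ x ∈ U \ S, p x := by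
      calc ∏ x ∈ U \ S, -(p x) = ∏ x ∈ U \ S, (-1 : ℝ) * p x := by
              exact Finset.prod_congr rfl fun x _ => by ring
        _ = (-1 : ℝ) ^ (U \ S).card * ∏ x ∈ U \ S, p x := by
              rw [Finset.prod_mul_distrib, Finset.prod_const]
    rw [h1, h4, h2, h3]
    ring
end

section
/- (Shearer) Let {A_x}_{x∈X} be events with dependency graph G and P(A_x) = p_x. Define for S ⊆ X, P(S) = Σ_{U: S ⊆ U ⊆ X, U independent in G} (-1)^{|U|-|S|} Π_{x∈U} p_x. If P(S) ≥ 0 for all S ⊆ X, then P(∩_{x∈X} Ā_x) ≥ P(∅) = Σ_{U ⊆ X, U independent} (-1)^{|U|} Π_{x∈U} p_x. -/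
open Finset MeasureTheory
open scoped Classical BigOperators

section QAux

set_option linter.unusedSectionVars false

noncomputable def shearerQ {X : Type*} [Fintype X] [DecidableEq X] (G : SimpleGraph X)
    (p : X → ℝ) (W : Finset X) : ℝ :=
  ∑ U ∈ (Finset.univ : Finset (Finset X)).filter
      (fun U => U ⊆ W ∧ ∀ a ∈ U, ∀ b ∈ U, ¬ G.Adj a b),
    (-1 : ℝ) ^ U.card * ∏ x ∈ U, p x

variable {X : Type*} [Fintype X] [DecidableEq X] (G : SimpleGraph X) (p : X → ℝ)

lemma shearerQ_empty : shearerQ G p ∅ = 1 := by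
  unfold shearerQ
  have h : (Finset.univ : Finset (Finset X)).filter
      (fun U => U ⊆ (∅ : Finset X) ∧ ∀ a ∈ U, ∀ b ∈ U, ¬ G.Adj a b) = {∅} := by
    ext U
    simp only [mem_filter, mem_univ, true_and, mem_singleton, Finset.subset_empty]
    constructor
    · rintro ⟨rfl, -⟩; rfl
    · rintro rfl; simp
  rw [h]; simp

lemma shearerP_empty_eq : shearerP G p ∅ = shearerQ G p Finset.univ := by
  unfold shearerP shearerQ
  refine Finset.sum_congr ?_ (fun U _ => by simp)
  ext U
  simp

lemma neg_one_pow_sub_real (a b : ℕ) (h : b ≤ a) :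
    (-1 : ℝ) ^ (a - b) = (-1) ^ a * (-1) ^ b := by
  have h2 : a + b = (a - b) + 2 * b := by omega
  calc (-1 : ℝ) ^ (a - b) = (-1) ^ (a - b) * ((-1 : ℝ) ^ 2) ^ b := by norm_num
    _ = (-1) ^ ((a - b) + 2 * b) := by rw [← pow_mul, ← pow_add]
    _ = (-1) ^ (a + b) := by rw [← h2]
    _ = (-1) ^ a * (-1) ^ b := pow_add _ _ _

lemma sum_powerset_neg_one_real {X : Type*} [DecidableEq X] (T : Finset X) :
    ∑ S ∈ T.powerset, (-1 : ℝ) ^ S.card = if T = ∅ then 1 else 0 := by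
  have h : ((∑ m ∈ T.powerset, (-1 : ℤ) ^ m.card : ℤ) : ℝ)
      = ∑ m ∈ T.powerset, (-1 : ℝ) ^ m.card := by push_cast; rfl
  rw [← h, Finset.sum_powerset_neg_one_pow_card]
  split_ifs <;> simp

lemma sum_shearerP (W : Finset X) :
    ∑ S ∈ (Finset.univ : Finset (Finset X)).filter (fun S => Disjoint S W),
      shearerP G p S = shearerQ G p W := by
  have L : ∀ S : Finset X, shearerP G p S
      = ∑ U ∈ (Finset.univ : Finset (Finset X)),
          if S ⊆ U ∧ (∀ a ∈ U, ∀ b ∈ U, ¬ G.Adj a b)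
          then (-1 : ℝ) ^ (U.card - S.card) * ∏ x ∈ U, p x else 0 :=
    fun S => Finset.sum_filter _ _
  calc ∑ S ∈ (Finset.univ : Finset (Finset X)).filter (fun S => Disjoint S W),
        shearerP G p S
      = ∑ S ∈ (Finset.univ : Finset (Finset X)).filter (fun S => Disjoint S W),
        ∑ U ∈ (Finset.univ : Finset (Finset X)),
          if S ⊆ U ∧ (∀ a ∈ U, ∀ b ∈ U, ¬ G.Adj a b)
          then (-1 : ℝ) ^ (U.card - S.card) * ∏ x ∈ U, p x else 0 :=
        Finset.sum_congr rfl (fun S _ => L S)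
    _ = ∑ U ∈ (Finset.univ : Finset (Finset X)),
        ∑ S ∈ (Finset.univ : Finset (Finset X)).filter (fun S => Disjoint S W),
          if S ⊆ U ∧ (∀ a ∈ U, ∀ b ∈ U, ¬ G.Adj a b)
          then (-1 : ℝ) ^ (U.card - S.card) * ∏ x ∈ U, p x else 0 := Finset.sum_comm
    _ = ∑ U ∈ (Finset.univ : Finset (Finset X)),
          (if U ⊆ W ∧ (∀ a ∈ U, ∀ b ∈ U, ¬ G.Adj a b)
           then (-1 : ℝ) ^ U.card * ∏ x ∈ U, p x else 0) := ?_
    _ = shearerQ G p W := (Finset.sum_filter _ _).symm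
  refine Finset.sum_congr rfl (fun U _ => ?_)
  by_cases hU : ∀ a ∈ U, ∀ b ∈ U, ¬ G.Adj a b
  · have step1 : ∑ S ∈ (Finset.univ : Finset (Finset X)).filter (fun S => Disjoint S W),
        (if S ⊆ U ∧ (∀ a ∈ U, ∀ b ∈ U, ¬ G.Adj a b)
         then (-1 : ℝ) ^ (U.card - S.card) * ∏ x ∈ U, p x else 0)
        = ∑ S ∈ (U \ W).powerset, (-1 : ℝ) ^ (U.card - S.card) * ∏ x ∈ U, p x := by
      rw [← Finset.sum_filter, Finset.filter_filter]
      apply Finset.sum_congr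
      · ext S
        simp only [mem_filter, mem_univ, true_and, Finset.mem_powerset, Finset.subset_sdiff,
          hU, and_true]
        tauto
      · intros; rfl
    rw [step1]
    have step2 : ∀ S ∈ (U \ W).powerset,
        (-1 : ℝ) ^ (U.card - S.card) * ∏ x ∈ U, p x
        = ((-1 : ℝ) ^ U.card * ∏ x ∈ U, p x) * (-1 : ℝ) ^ S.card := by
      intro S hS
      rw [Finset.mem_powerset] at hS
      have hle : S.card ≤ U.card :=
        Finset.card_le_card (hS.trans (Finset.sdiff_subset))
      rw [neg_one_pow_sub_real _ _ hle]; ring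
    rw [Finset.sum_congr rfl step2, ← Finset.mul_sum, sum_powerset_neg_one_real]
    by_cases hUW : U ⊆ W
    · rw [if_pos (Finset.sdiff_eq_empty_iff_subset.2 hUW), mul_one, if_pos ⟨hUW, hU⟩]
    · simp [fun h => hUW (Finset.sdiff_eq_empty_iff_subset.1 h), hUW]
  · simp only [hU, and_false, if_false, Finset.sum_const_zero]

lemma shearerQ_rec {Z : Finset X} {x : X} (hx : x ∈ Z) :
    shearerQ G p Z = shearerQ G p (Z.erase x)
      - p x * shearerQ G p (Z \ insert x (G.neighborFinset x)) := by
  classical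
  set N := insert x (G.neighborFinset x) with hN
  have split := Finset.sum_filter_add_sum_filter_not
    ((Finset.univ : Finset (Finset X)).filter
      (fun U => U ⊆ Z ∧ ∀ a ∈ U, ∀ b ∈ U, ¬ G.Adj a b))
    (fun U => x ∈ U) (fun U => (-1 : ℝ) ^ U.card * ∏ y ∈ U, p y)
  have h2 : (((Finset.univ : Finset (Finset X)).filter
      (fun U => U ⊆ Z ∧ ∀ a ∈ U, ∀ b ∈ U, ¬ G.Adj a b)).filter (fun U => ¬ x ∈ U))
      = (Finset.univ : Finset (Finset X)).filter
        (fun U => U ⊆ Z.erase x ∧ ∀ a ∈ U, ∀ b ∈ U, ¬ G.Adj a b) := by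
    ext U
    simp only [Finset.mem_filter, Finset.mem_univ, true_and, Finset.subset_erase]
    tauto
  have h1 : (∑ U ∈ ((Finset.univ : Finset (Finset X)).filter
      (fun U => U ⊆ Z ∧ ∀ a ∈ U, ∀ b ∈ U, ¬ G.Adj a b)).filter (fun U => x ∈ U),
        (-1 : ℝ) ^ U.card * ∏ y ∈ U, p y)
      = - (p x * shearerQ G p (Z \ N)) := by
    unfold shearerQ
    rw [Finset.mul_sum, ← Finset.sum_neg_distrib]
    refine Finset.sum_nbij' (fun U => U.erase x) (fun V => insert x V) ?_ ?_ ?_ ?_ ?_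
    · intro U hU
      simp only [Finset.mem_filter, Finset.mem_univ, true_and] at hU ⊢
      obtain ⟨⟨hUZ, hind⟩, hxU⟩ := hU
      refine ⟨fun y hy => ?_, fun a ha b hb => hind a (Finset.mem_of_mem_erase ha) b
        (Finset.mem_of_mem_erase hb)⟩
      have hyU := Finset.mem_of_mem_erase hy
      have hyx : y ≠ x := Finset.ne_of_mem_erase hy
      refine Finset.mem_sdiff.2 ⟨hUZ hyU, ?_⟩
      simp only [hN, Finset.mem_insert, SimpleGraph.mem_neighborFinset]
      push_neg
      exact ⟨hyx, fun hadj => hind x hxU y hyU hadj⟩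
    · intro V hV
      simp only [Finset.mem_filter, Finset.mem_univ, true_and] at hV ⊢
      obtain ⟨hVZ, hind⟩ := hV
      have hxV : x ∉ V := fun hxV => by
        have := hVZ hxV
        rw [Finset.mem_sdiff] at this
        exact this.2 (Finset.mem_insert_self _ _)
      have hnadj : ∀ y ∈ V, ¬ G.Adj x y := by
        intro y hy hadj
        have := hVZ hy
        rw [Finset.mem_sdiff] at this
        exact this.2 (Finset.mem_insert_of_mem ((SimpleGraph.mem_neighborFinset G x y).2 hadj))
      refine ⟨⟨?_, ?_⟩, Finset.mem_insert_self _ _⟩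
      · intro y hy
        rcases Finset.mem_insert.1 hy with rfl | hy
        · exact hx
        · exact (Finset.mem_sdiff.1 (hVZ hy)).1
      · intro a ha b hb hadj
        rcases Finset.mem_insert.1 ha with rfl | ha'
        · rcases Finset.mem_insert.1 hb with rfl | hb'
          · exact G.irrefl hadj
          · exact hnadj b hb' hadj
        · rcases Finset.mem_insert.1 hb with rfl | hb'
          · exact hnadj a ha' hadj.symm
          · exact hind a ha' b hb' hadj
    · intro U hU
      simp only [Finset.mem_filter] at hU
      exact Finset.insert_erase hU.2
    · intro V hV
      simp only [Finset.mem_filter, Finset.mem_univ, true_and] at hV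
      have hxV : x ∉ V := fun hxV => by
        have := hV.1 hxV
        rw [Finset.mem_sdiff] at this
        exact this.2 (Finset.mem_insert_self _ _)
      exact Finset.erase_insert hxV
    · intro U hU
      simp only [Finset.mem_filter] at hU
      have hxU : x ∈ U := hU.2
      have hcard : U.card = (U.erase x).card + 1 := by
        rw [Finset.card_erase_of_mem hxU]
        have : 1 ≤ U.card := Finset.card_pos.2 ⟨x, hxU⟩
        omega
      have hprod : ∏ y ∈ U, p y = p x * ∏ y ∈ U.erase x, p y :=
        (Finset.mul_prod_erase U p hxU).symm
      rw [hcard, hprod, pow_succ]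
      ring
  calc shearerQ G p Z
      = (∑ U ∈ ((Finset.univ : Finset (Finset X)).filter
          (fun U => U ⊆ Z ∧ ∀ a ∈ U, ∀ b ∈ U, ¬ G.Adj a b)).filter (fun U => x ∈ U),
            (-1 : ℝ) ^ U.card * ∏ y ∈ U, p y)
        + (∑ U ∈ ((Finset.univ : Finset (Finset X)).filter
          (fun U => U ⊆ Z ∧ ∀ a ∈ U, ∀ b ∈ U, ¬ G.Adj a b)).filter (fun U => ¬ x ∈ U),
            (-1 : ℝ) ^ U.card * ∏ y ∈ U, p y) := split.symm
    _ = -(p x * shearerQ G p (Z \ N)) + shearerQ G p (Z.erase x) := by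
        rw [h1, h2]; rfl
    _ = shearerQ G p (Z.erase x) - p x * shearerQ G p (Z \ N) := by ring

end QAux

theorem shearer {Ω : Type*} [MeasurableSpace Ω] (ν : Measure Ω)
    [IsProbabilityMeasure ν]
    {X : Type*} [Fintype X] [DecidableEq X] (G : SimpleGraph X)
    (A : X → Set Ω) (hA : ∀ x, MeasurableSet (A x))
    (hdep : ∀ x : X, ProbabilityTheory.Indep
      (MeasurableSpace.generateFrom {A x})
      (MeasurableSpace.generateFrom {s | ∃ y, y ∉ insert x (G.neighborFinset x) ∧ s = A y}) ν)
    (p : X → ℝ) (hp : ∀ x, (ν (A x)).toReal = p x)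
    (hpos : ∀ S : Finset X, 0 ≤ shearerP G p S) :
    (ν (⋂ x, (A x)ᶜ)).toReal ≥ shearerP G p ∅ := by
  classical
  have hpnn : ∀ x, 0 ≤ p x := fun x => (hp x) ▸ ENNReal.toReal_nonneg
  have qnn : ∀ W : Finset X, 0 ≤ shearerQ G p W := by
    intro W
    rw [← sum_shearerP G p W]
    exact Finset.sum_nonneg fun S _ => hpos S
  set r : Finset X → ℝ := fun W => (ν (⋂ y ∈ W, (A y)ᶜ)).toReal with hr
  have rnn : ∀ W, 0 ≤ r W := fun W => ENNReal.toReal_nonneg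
  have rempty : r ∅ = 1 := by simp [hr]
  have rrec : ∀ (Z : Finset X) (x : X), x ∈ Z →
      r (Z.erase x) - p x * r (Z \ insert x (G.neighborFinset x)) ≤ r Z := by
    intro Z x hx
    set B := ⋂ y ∈ Z.erase x, (A y)ᶜ with hB
    set C := ⋂ y ∈ Z \ insert x (G.neighborFinset x), (A y)ᶜ with hC
    have hsplit : (ν (B ∩ A x)).toReal + (ν (B \ A x)).toReal = (ν B).toReal := by
      rw [← ENNReal.toReal_add (measure_ne_top _ _) (measure_ne_top _ _),
        measure_inter_add_diff B (hA x)]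
    have hZeq : (⋂ y ∈ Z, (A y)ᶜ) = B \ A x := by
      rw [← Finset.insert_erase hx, Finset.set_biInter_insert, hB, Set.inter_comm,
        ← Set.diff_eq]
    have hsub : B ∩ A x ⊆ A x ∩ C := by
      rintro ω ⟨hω1, hω2⟩
      refine ⟨hω2, ?_⟩
      rw [hC, Set.mem_iInter₂]
      intro y hy
      rw [Finset.mem_sdiff] at hy
      have hyx : y ≠ x := fun h => hy.2 (by rw [h]; exact Finset.mem_insert_self x _)
      rw [hB, Set.mem_iInter₂] at hω1
      exact hω1 y (Finset.mem_erase.2 ⟨hyx, hy.1⟩)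
    have hindep : ν (A x ∩ C) = ν (A x) * ν C := by
      refine (ProbabilityTheory.Indep_iff _ _ ν).1 (hdep x) _ _ ?_ ?_
      · exact MeasurableSpace.measurableSet_generateFrom rfl
      · rw [hC]
        refine Finset.measurableSet_biInter _ (fun y hy => ?_)
        refine MeasurableSet.compl ?_
        refine MeasurableSpace.measurableSet_generateFrom ?_
        exact ⟨y, (Finset.mem_sdiff.1 hy).2, rfl⟩
    have hle : (ν (B ∩ A x)).toReal ≤ p x * r (Z \ insert x (G.neighborFinset x)) := by
      have h1 : ν (B ∩ A x) ≤ ν (A x ∩ C) := measure_mono hsub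
      have h2 : (ν (B ∩ A x)).toReal ≤ (ν (A x ∩ C)).toReal :=
        ENNReal.toReal_le_toReal (measure_ne_top _ _) (measure_ne_top _ _) |>.2 h1
      have h3 : (ν (A x ∩ C)).toReal = p x * r (Z \ insert x (G.neighborFinset x)) := by
        rw [hindep, ENNReal.toReal_mul, hp x]
      linarith
    have hrz : r Z = (ν (B \ A x)).toReal := by rw [hr]; simp only; rw [hZeq]
    have hrz1 : r (Z.erase x) = (ν B).toReal := rfl
    rw [hrz, hrz1]
    linarith
  have main : ∀ Z : Finset X, ∀ W ⊆ Z, shearerQ G p Z * r W ≤ shearerQ G p W * r Z := by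
    intro Z
    induction Z using Finset.strongInduction with
    | _ Z IH =>
      intro W hW
      by_cases hWZ : W = Z
      · subst hWZ; exact le_refl _
      obtain ⟨x, hxZ, hxW⟩ : ∃ x ∈ Z, x ∉ W := by
        by_contra h; push_neg at h; exact hWZ (Finset.Subset.antisymm hW h)
      have hZ1 : Z.erase x ⊂ Z := Finset.erase_ssubset hxZ
      have hWZ1 : W ⊆ Z.erase x := Finset.subset_erase.2 ⟨hW, hxW⟩
      have hZN1 : Z \ insert x (G.neighborFinset x) ⊆ Z.erase x := by
        intro y hy; rw [Finset.mem_sdiff] at hy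
        exact Finset.mem_erase.2 ⟨fun h => hy.2 (by rw [h]; exact Finset.mem_insert_self x _), hy.1⟩
      have IH1 := IH _ hZ1 _ hZN1
      have IH2 := IH _ hZ1 _ hWZ1
      have qrec := shearerQ_rec G p hxZ
      have S1 : shearerQ G p Z * r (Z.erase x) ≤ shearerQ G p (Z.erase x) * r Z := by
        have h1 : shearerQ G p Z * r (Z.erase x)
            = shearerQ G p (Z.erase x) * r (Z.erase x)
              - p x * (shearerQ G p (Z \ insert x (G.neighborFinset x)) * r (Z.erase x)) := by
          rw [qrec]; ring
        have h2 : p x * (shearerQ G p (Z.erase x) * r (Z \ insert x (G.neighborFinset x)))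
            ≤ p x * (shearerQ G p (Z \ insert x (G.neighborFinset x)) * r (Z.erase x)) :=
          mul_le_mul_of_nonneg_left IH1 (hpnn x)
        have h3 : shearerQ G p (Z.erase x) * r (Z.erase x)
            - p x * (shearerQ G p (Z.erase x) * r (Z \ insert x (G.neighborFinset x)))
            ≤ shearerQ G p (Z.erase x) * r Z := by
          calc shearerQ G p (Z.erase x) * r (Z.erase x)
              - p x * (shearerQ G p (Z.erase x) * r (Z \ insert x (G.neighborFinset x)))
              = shearerQ G p (Z.erase x)
                * (r (Z.erase x) - p x * r (Z \ insert x (G.neighborFinset x))) := by ring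
            _ ≤ shearerQ G p (Z.erase x) * r Z :=
                mul_le_mul_of_nonneg_left (rrec Z x hxZ) (qnn _)
        rw [h1]; linarith
      have comb : shearerQ G p (Z.erase x) * (shearerQ G p Z * r W)
          ≤ shearerQ G p (Z.erase x) * (shearerQ G p W * r Z) := by
        calc shearerQ G p (Z.erase x) * (shearerQ G p Z * r W)
            = shearerQ G p Z * (shearerQ G p (Z.erase x) * r W) := by ring
          _ ≤ shearerQ G p Z * (shearerQ G p W * r (Z.erase x)) :=
              mul_le_mul_of_nonneg_left IH2 (qnn Z)
          _ = shearerQ G p W * (shearerQ G p Z * r (Z.erase x)) := by ring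
          _ ≤ shearerQ G p W * (shearerQ G p (Z.erase x) * r Z) :=
              mul_le_mul_of_nonneg_left S1 (qnn W)
          _ = shearerQ G p (Z.erase x) * (shearerQ G p W * r Z) := by ring
      rcases (qnn (Z.erase x)).lt_or_eq with hq | hq
      · exact le_of_mul_le_mul_left comb hq
      · have hqZ : shearerQ G p Z = 0 := by
          have hle0 : shearerQ G p Z ≤ 0 := by
            rw [qrec, ← hq]
            have := mul_nonneg (hpnn x) (qnn (Z \ insert x (G.neighborFinset x)))
            linarith
          exact le_antisymm hle0 (qnn Z)
        rw [hqZ, zero_mul]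
        exact mul_nonneg (qnn W) (rnn Z)
  have fin := main Finset.univ ∅ (Finset.empty_subset _)
  rw [shearerQ_empty, rempty, one_mul, mul_one] at fin
  have runiv : r Finset.univ = (ν (⋂ x, (A x)ᶜ)).toReal := by
    rw [hr]; simp only; congr 2; simp
  rw [ge_iff_le, shearerP_empty_eq, ← runiv]
  exact fin
end

section
/- Let G = (V,E) be a finite graph with maximum degree Δ ≥ 1, and let V = V₁ ∪ … ∪ Vₙ be a partition of V into n pairwise disjoint sets, each of size at least 4Δ. Then there exists an independent set W ⊆ V of cardinality n containing exactly one vertex from each Vᵢ. -/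
open Finset
open scoped Classical BigOperators

section IndepTransversalAux

variable {V : Type*} [Fintype V] [DecidableEq V]
variable (G : SimpleGraph V) [DecidableRel G.Adj]
variable {n : ℕ} (Vs : Fin n → Finset V) (d : Fin n → V)

/-- The set of "good" partial transversals on a set `A` of classes:
functions picking a vertex in `Vs i` for `i ∈ A` (default `d i` elsewhere),
pairwise nonadjacent on `A`. -/
noncomputable def itGood (A : Finset (Fin n)) : Finset (Fin n → V) :=
  Finset.univ.filter (fun ω =>
    (∀ i, (i ∈ A → ω i ∈ Vs i) ∧ (i ∉ A → ω i = d i)) ∧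
    ∀ i ∈ A, ∀ j ∈ A, i ≠ j → ¬ G.Adj (ω i) (ω j))

lemma mem_itGood {A : Finset (Fin n)} {ω : Fin n → V} :
    ω ∈ itGood G Vs d A ↔
      ((∀ i, (i ∈ A → ω i ∈ Vs i) ∧ (i ∉ A → ω i = d i)) ∧
       ∀ i ∈ A, ∀ j ∈ A, i ≠ j → ¬ G.Adj (ω i) (ω j)) := by
  simp [itGood]

/-- Number of good assignments on `A` using vertex `u` at class `j`. -/
noncomputable def itNu (A : Finset (Fin n)) (j : Fin n) (u : V) : ℕ :=
  ((itGood G Vs d A).filter (fun ω => ω j = u)).card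

lemma itGood_insert_card (A : Finset (Fin n)) (j : Fin n) (hj : j ∉ A) :
    (itGood G Vs d (insert j A)).card
      = ∑ ω ∈ itGood G Vs d A,
          ((Vs j).filter (fun v => ∀ i ∈ A, ¬ G.Adj v (ω i))).card := by
  have H : ∀ ω ∈ itGood G Vs d (insert j A),
      Function.update ω j (d j) ∈ itGood G Vs d A := by
    intro ω hω
    rw [mem_itGood] at hω ⊢
    obtain ⟨hmem, hind⟩ := hω
    constructor
    · intro i
      constructor
      · intro hiA
        have hij : i ≠ j := fun h => hj (h ▸ hiA)
        rw [Function.update_of_ne hij]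
        exact (hmem i).1 (Finset.mem_insert_of_mem hiA)
      · intro hiA
        by_cases hij : i = j
        · subst hij; rw [Function.update_self]
        · rw [Function.update_of_ne hij]
          exact (hmem i).2 (fun h => hiA (Finset.mem_of_mem_insert_of_ne h hij))
    · intro i hi k hk hik
      have hij : i ≠ j := fun h => hj (h ▸ hi)
      have hkj : k ≠ j := fun h => hj (h ▸ hk)
      rw [Function.update_of_ne hij, Function.update_of_ne hkj]
      exact hind i (Finset.mem_insert_of_mem hi) k (Finset.mem_insert_of_mem hk) hik
  rw [Finset.card_eq_sum_card_fiberwise H]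
  apply Finset.sum_congr rfl
  intro ω' hω'
  rw [mem_itGood] at hω'
  obtain ⟨hmem', hind'⟩ := hω'
  have hω'j : ω' j = d j := (hmem' j).2 hj
  apply Finset.card_bij (fun ω _ => ω j)
  · -- maps to
    intro ω hω
    rw [Finset.mem_filter] at hω
    obtain ⟨hωg, hωf⟩ := hω
    rw [mem_itGood] at hωg
    obtain ⟨hmem, hind⟩ := hωg
    rw [Finset.mem_filter]
    constructor
    · exact (hmem j).1 (Finset.mem_insert_self j A)
    · intro i hi
      have hij : i ≠ j := fun h => hj (h ▸ hi)
      have : ω' i = ω i := by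
        rw [← hωf, Function.update_of_ne hij]
      rw [this]
      intro hadj
      exact hind j (Finset.mem_insert_self j A) i (Finset.mem_insert_of_mem hi)
        (Ne.symm hij) hadj
  · -- injective
    intro ω₁ h₁ ω₂ h₂ heq
    rw [Finset.mem_filter] at h₁ h₂
    funext i
    by_cases hij : i = j
    · subst hij; exact heq
    · have e₁ : Function.update ω₁ j (d j) i = ω' i := by rw [h₁.2]
      have e₂ : Function.update ω₂ j (d j) i = ω' i := by rw [h₂.2]
      rw [Function.update_of_ne hij] at e₁ e₂
      rw [e₁, e₂]
  · -- surjective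
    intro v hv
    rw [Finset.mem_filter] at hv
    obtain ⟨hvVs, hvcomp⟩ := hv
    refine ⟨Function.update ω' j v, ?_, Function.update_self j v ω'⟩
    rw [Finset.mem_filter]
    constructor
    · rw [mem_itGood]
      constructor
      · intro i
        constructor
        · intro hi
          by_cases hij : i = j
          · subst hij; rw [Function.update_self]; exact hvVs
          · rw [Function.update_of_ne hij]
            exact (hmem' i).1 (Finset.mem_of_mem_insert_of_ne hi hij)
        · intro hi
          have hij : i ≠ j := fun h => hi (h ▸ Finset.mem_insert_self j A)
          rw [Function.update_of_ne hij]
          exact (hmem' i).2 (fun h => hi (Finset.mem_insert_of_mem h))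
      · intro i hi k hk hik
        by_cases hijj : i = j
        · subst hijj
          have hkj : k ≠ i := Ne.symm hik
          have hkA : k ∈ A := Finset.mem_of_mem_insert_of_ne hk hkj
          rw [Function.update_self, Function.update_of_ne hkj]
          exact hvcomp k hkA
        · have hiA : i ∈ A := Finset.mem_of_mem_insert_of_ne hi hijj
          rw [Function.update_of_ne hijj]
          by_cases hkjj : k = j
          · subst hkjj
            rw [Function.update_self]
            intro hadj
            exact hvcomp i hiA (G.adj_symm hadj)
          · have hkA : k ∈ A := Finset.mem_of_mem_insert_of_ne hk hkjj
            rw [Function.update_of_ne hkjj]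
            exact hind' i hiA k hkA hik
    · -- update of update is ω'
      funext i
      by_cases hij : i = j
      · subst hij
        rw [Function.update_self, hω'j]
      · rw [Function.update_of_ne hij, Function.update_of_ne hij]

lemma itNu_le_erase (A : Finset (Fin n)) (j : Fin n) (hj : j ∈ A) (u : V) :
    itNu G Vs d A j u ≤ (itGood G Vs d (A.erase j)).card := by
  apply Finset.card_le_card_of_injOn (fun ω => Function.update ω j (d j))
  · intro ω hω
    rw [Finset.mem_coe, Finset.mem_filter] at hω
    obtain ⟨hωg, hωu⟩ := hω
    rw [Finset.mem_coe]
    beta_reduce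
    rw [mem_itGood] at hωg ⊢
    obtain ⟨hmem, hind⟩ := hωg
    constructor
    · intro i
      constructor
      · intro hi
        have hij : i ≠ j := Finset.ne_of_mem_erase hi
        rw [Function.update_of_ne hij]
        exact (hmem i).1 (Finset.mem_of_mem_erase hi)
      · intro hi
        by_cases hij : i = j
        · subst hij; rw [Function.update_self]
        · rw [Function.update_of_ne hij]
          exact (hmem i).2 (fun h => hi (Finset.mem_erase_of_ne_of_mem hij h))
    · intro i hi k hk hik
      have hij : i ≠ j := Finset.ne_of_mem_erase hi
      have hkj : k ≠ j := Finset.ne_of_mem_erase hk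
      rw [Function.update_of_ne hij, Function.update_of_ne hkj]
      exact hind i (Finset.mem_of_mem_erase hi) k (Finset.mem_of_mem_erase hk) hik
  · intro ω₁ h₁ ω₂ h₂ heq
    rw [Finset.coe_filter, Set.mem_setOf_eq] at h₁ h₂
    funext i
    by_cases hij : i = j
    · subst hij; rw [h₁.2, h₂.2]
    · have := congrFun heq i
      simp only [Function.update_of_ne hij] at this
      exact this

/-- For a fixed vertex `v`, the total number of its neighbours across all the
(disjoint) classes is at most `Δ`. -/
lemma sum_adj_card_le (hdisj : ∀ i j, i ≠ j → Disjoint (Vs i) (Vs j))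
    (Δ : ℕ) (hΔ : G.maxDegree ≤ Δ) (A : Finset (Fin n)) (v : V) :
    ∑ i ∈ A, ((Vs i).filter (fun u => G.Adj v u)).card ≤ Δ := by
  have hdisj' : ∀ i ∈ A, ∀ k ∈ A, i ≠ k →
      Disjoint ((Vs i).filter (fun u => G.Adj v u)) ((Vs k).filter (fun u => G.Adj v u)) := by
    intro i _ k _ hik
    exact Finset.disjoint_filter_filter (hdisj i k hik)
  rw [← Finset.card_biUnion hdisj']
  have hsub : (A.biUnion (fun i => (Vs i).filter (fun u => G.Adj v u))) ⊆ G.neighborFinset v := by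
    intro u hu
    rw [Finset.mem_biUnion] at hu
    obtain ⟨i, _, hu⟩ := hu
    rw [Finset.mem_filter] at hu
    rw [SimpleGraph.mem_neighborFinset]
    exact hu.2
  calc (A.biUnion (fun i => (Vs i).filter (fun u => G.Adj v u))).card
      ≤ (G.neighborFinset v).card := Finset.card_le_card hsub
    _ = G.degree v := (G.card_neighborFinset_eq_degree v).symm ▸ rfl
    _ ≤ G.maxDegree := G.degree_le_maxDegree v
    _ ≤ Δ := hΔ

lemma adj_filter_card_eq (A : Finset (Fin n)) (i : Fin n) (hi : i ∈ A) (v : V) :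
    ((itGood G Vs d A).filter (fun ω => G.Adj v (ω i))).card
      = ∑ u ∈ (Vs i).filter (fun u => G.Adj v u), itNu G Vs d A i u := by
  have H : ∀ ω ∈ (itGood G Vs d A).filter (fun ω => G.Adj v (ω i)),
      ω i ∈ (Vs i).filter (fun u => G.Adj v u) := by
    intro ω hω
    rw [Finset.mem_filter] at hω
    obtain ⟨hωg, hadj⟩ := hω
    rw [mem_itGood] at hωg
    rw [Finset.mem_filter]
    exact ⟨(hωg.1 i).1 hi, hadj⟩
  rw [Finset.card_eq_sum_card_fiberwise H]
  apply Finset.sum_congr rfl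
  intro u hu
  rw [Finset.mem_filter] at hu
  unfold itNu
  congr 1
  rw [Finset.filter_filter]
  apply Finset.filter_congr
  intro ω _
  constructor
  · intro h; exact h.2
  · intro h; exact ⟨h ▸ hu.2, h⟩

/-- Key step: adding a new class at least multiplies the (doubled) count by `|Vs j|`,
assuming the main frequency bound holds on `A`. -/
lemma itGood_step (hdisj : ∀ i j, i ≠ j → Disjoint (Vs i) (Vs j))
    (Δ : ℕ) (hΔpos : 1 ≤ Δ) (hΔ : G.maxDegree ≤ Δ)
    (A : Finset (Fin n)) (j : Fin n) (hj : j ∉ A)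
    (hIH : ∀ i ∈ A, ∀ u, 2 * Δ * itNu G Vs d A i u ≤ (itGood G Vs d A).card) :
    (Vs j).card * (itGood G Vs d A).card ≤ 2 * (itGood G Vs d (insert j A)).card := by
  set N := (itGood G Vs d A).card with hN
  -- decomposition
  have hdecomp := itGood_insert_card G Vs d A j hj
  -- for each ω', |Vs j| = comp + bad
  have hsplit : ∀ ω' : Fin n → V,
      ((Vs j).filter (fun v => ∀ i ∈ A, ¬ G.Adj v (ω' i))).card
        + ((Vs j).filter (fun v => ¬ ∀ i ∈ A, ¬ G.Adj v (ω' i))).card = (Vs j).card := by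
    intro ω'
    exact Finset.card_filter_add_card_filter_not _
  -- bad bound pointwise
  have hbad_pt : ∀ ω' : Fin n → V,
      ((Vs j).filter (fun v => ¬ ∀ i ∈ A, ¬ G.Adj v (ω' i))).card
        ≤ ∑ v ∈ Vs j, ∑ i ∈ A, (if G.Adj v (ω' i) then 1 else 0) := by
    intro ω'
    calc ((Vs j).filter (fun v => ¬ ∀ i ∈ A, ¬ G.Adj v (ω' i))).card
        = ∑ v ∈ (Vs j).filter (fun v => ¬ ∀ i ∈ A, ¬ G.Adj v (ω' i)), 1 := by
          rw [Finset.card_eq_sum_ones]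
      _ ≤ ∑ v ∈ (Vs j).filter (fun v => ¬ ∀ i ∈ A, ¬ G.Adj v (ω' i)),
            ∑ i ∈ A, (if G.Adj v (ω' i) then 1 else 0) := by
          apply Finset.sum_le_sum
          intro v hv
          rw [Finset.mem_filter] at hv
          push_neg at hv
          obtain ⟨i, hi, hadj⟩ := hv.2
          have hsl : (fun k => if G.Adj v (ω' k) then (1 : ℕ) else 0) i
              ≤ ∑ k ∈ A, (if G.Adj v (ω' k) then (1 : ℕ) else 0) :=
            Finset.single_le_sum (f := fun k => if G.Adj v (ω' k) then (1 : ℕ) else 0)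
              (fun k _ => Nat.zero_le _) hi
          simpa [hadj] using hsl
      _ ≤ ∑ v ∈ Vs j, ∑ i ∈ A, (if G.Adj v (ω' i) then 1 else 0) := by
          apply Finset.sum_le_sum_of_subset (Finset.filter_subset _ _)
  -- total bad bound
  have htotal : 2 * Δ * (∑ ω' ∈ itGood G Vs d A,
      ((Vs j).filter (fun v => ¬ ∀ i ∈ A, ¬ G.Adj v (ω' i))).card)
        ≤ (Vs j).card * Δ * N := by
    have h1 : (∑ ω' ∈ itGood G Vs d A,
        ((Vs j).filter (fun v => ¬ ∀ i ∈ A, ¬ G.Adj v (ω' i))).card)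
          ≤ ∑ v ∈ Vs j, ∑ i ∈ A, ((itGood G Vs d A).filter (fun ω => G.Adj v (ω i))).card := by
      calc (∑ ω' ∈ itGood G Vs d A,
          ((Vs j).filter (fun v => ¬ ∀ i ∈ A, ¬ G.Adj v (ω' i))).card)
          ≤ ∑ ω' ∈ itGood G Vs d A, ∑ v ∈ Vs j, ∑ i ∈ A, (if G.Adj v (ω' i) then 1 else 0) :=
            Finset.sum_le_sum (fun ω' _ => hbad_pt ω')
        _ = ∑ v ∈ Vs j, ∑ ω' ∈ itGood G Vs d A, ∑ i ∈ A, (if G.Adj v (ω' i) then 1 else 0) :=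
            Finset.sum_comm
        _ = ∑ v ∈ Vs j, ∑ i ∈ A, ∑ ω' ∈ itGood G Vs d A, (if G.Adj v (ω' i) then 1 else 0) := by
            apply Finset.sum_congr rfl; intro v _; exact Finset.sum_comm
        _ = ∑ v ∈ Vs j, ∑ i ∈ A, ((itGood G Vs d A).filter (fun ω => G.Adj v (ω i))).card := by
            apply Finset.sum_congr rfl; intro v _
            apply Finset.sum_congr rfl; intro i _
            rw [Finset.card_filter]
    have h2 : 2 * Δ * (∑ v ∈ Vs j, ∑ i ∈ A,
        ((itGood G Vs d A).filter (fun ω => G.Adj v (ω i))).card)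
          ≤ (Vs j).card * Δ * N := by
      have h3 : ∀ v ∈ Vs j, 2 * Δ * (∑ i ∈ A,
          ((itGood G Vs d A).filter (fun ω => G.Adj v (ω i))).card) ≤ Δ * N := by
        intro v _
        calc 2 * Δ * (∑ i ∈ A, ((itGood G Vs d A).filter (fun ω => G.Adj v (ω i))).card)
            = ∑ i ∈ A, 2 * Δ * ((itGood G Vs d A).filter (fun ω => G.Adj v (ω i))).card := by
              rw [Finset.mul_sum]
          _ = ∑ i ∈ A, 2 * Δ * (∑ u ∈ (Vs i).filter (fun u => G.Adj v u), itNu G Vs d A i u) := by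
              apply Finset.sum_congr rfl; intro i hi
              rw [adj_filter_card_eq G Vs d A i hi v]
          _ = ∑ i ∈ A, ∑ u ∈ (Vs i).filter (fun u => G.Adj v u), 2 * Δ * itNu G Vs d A i u := by
              apply Finset.sum_congr rfl; intro i _; rw [Finset.mul_sum]
          _ ≤ ∑ i ∈ A, ∑ u ∈ (Vs i).filter (fun u => G.Adj v u), N := by
              apply Finset.sum_le_sum; intro i hi
              apply Finset.sum_le_sum; intro u _
              exact hIH i hi u
          _ = (∑ i ∈ A, ((Vs i).filter (fun u => G.Adj v u)).card) * N := by
              rw [Finset.sum_mul]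
              apply Finset.sum_congr rfl; intro i _
              rw [Finset.sum_const, smul_eq_mul]
          _ ≤ Δ * N := by
              apply Nat.mul_le_mul_right
              exact sum_adj_card_le G Vs hdisj Δ hΔ A v
      calc 2 * Δ * (∑ v ∈ Vs j, ∑ i ∈ A,
          ((itGood G Vs d A).filter (fun ω => G.Adj v (ω i))).card)
          = ∑ v ∈ Vs j, 2 * Δ * (∑ i ∈ A,
            ((itGood G Vs d A).filter (fun ω => G.Adj v (ω i))).card) := by
            rw [Finset.mul_sum]
        _ ≤ ∑ v ∈ Vs j, Δ * N := Finset.sum_le_sum h3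
        _ = (Vs j).card * (Δ * N) := by rw [Finset.sum_const, smul_eq_mul]
        _ = (Vs j).card * Δ * N := by ring
    calc 2 * Δ * (∑ ω' ∈ itGood G Vs d A,
        ((Vs j).filter (fun v => ¬ ∀ i ∈ A, ¬ G.Adj v (ω' i))).card)
        ≤ 2 * Δ * (∑ v ∈ Vs j, ∑ i ∈ A,
            ((itGood G Vs d A).filter (fun ω => G.Adj v (ω i))).card) := by
          apply Nat.mul_le_mul_left; exact h1
      _ ≤ (Vs j).card * Δ * N := h2
  -- bad sum ≤ (Vs j).card * N / 2 in multiplied form: 2 * badsum ≤ (Vs j).card * N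
  set BAD := ∑ ω' ∈ itGood G Vs d A,
      ((Vs j).filter (fun v => ¬ ∀ i ∈ A, ¬ G.Adj v (ω' i))).card with hBAD
  have hbad2 : 2 * BAD ≤ (Vs j).card * N := by
    have : Δ * (2 * BAD) ≤ Δ * ((Vs j).card * N) := by
      calc Δ * (2 * BAD) = 2 * Δ * BAD := by ring
        _ ≤ (Vs j).card * Δ * N := htotal
        _ = Δ * ((Vs j).card * N) := by ring
    exact Nat.le_of_mul_le_mul_left this hΔpos
  -- comp sum + bad sum = |Vs j| * N
  have hsum : (∑ ω' ∈ itGood G Vs d A,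
      ((Vs j).filter (fun v => ∀ i ∈ A, ¬ G.Adj v (ω' i))).card) + BAD = (Vs j).card * N := by
    rw [hBAD, ← Finset.sum_add_distrib]
    calc (∑ ω' ∈ itGood G Vs d A,
        (((Vs j).filter (fun v => ∀ i ∈ A, ¬ G.Adj v (ω' i))).card
          + ((Vs j).filter (fun v => ¬ ∀ i ∈ A, ¬ G.Adj v (ω' i))).card))
        = ∑ _ω' ∈ itGood G Vs d A, (Vs j).card := by
          apply Finset.sum_congr rfl; intro ω' _; exact hsplit ω'
      _ = N * (Vs j).card := by rw [Finset.sum_const, smul_eq_mul]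
      _ = (Vs j).card * N := by ring
  -- conclude
  rw [hdecomp, ← hsum]
  rw [← hsum, two_mul] at hbad2
  have hBS := le_of_add_le_add_right hbad2
  rw [two_mul]
  exact Nat.add_le_add_left hBS _

/-- Main frequency bound, by strong induction on the number of classes:
no vertex is used by more than a `1/(2Δ)` fraction of good assignments. -/
lemma itNu_main (hdisj : ∀ i j, i ≠ j → Disjoint (Vs i) (Vs j))
    (Δ : ℕ) (hΔpos : 1 ≤ Δ) (hΔ : G.maxDegree ≤ Δ)
    (hsize : ∀ i, 4 * Δ ≤ (Vs i).card) :
    ∀ m : ℕ, ∀ A : Finset (Fin n), A.card = m →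
      ∀ j ∈ A, ∀ u, 2 * Δ * itNu G Vs d A j u ≤ (itGood G Vs d A).card := by
  intro m
  induction m with
  | zero =>
    intro A hA j hj
    rw [Finset.card_eq_zero] at hA
    subst hA
    exact absurd hj (Finset.notMem_empty j)
  | succ m ih =>
    intro A hA j hj u
    set A' := A.erase j with hA'
    have hA'card : A'.card = m := by
      rw [hA', Finset.card_erase_of_mem hj, hA]
      omega
    have hjA' : j ∉ A' := Finset.notMem_erase j A
    have hins : insert j A' = A := Finset.insert_erase hj
    have hstep := itGood_step G Vs d hdisj Δ hΔpos hΔ A' j hjA'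
      (fun i hi u' => ih A' hA'card i hi u')
    rw [hins] at hstep
    -- hstep : (Vs j).card * N' ≤ 2 * N
    have hnu : itNu G Vs d A j u ≤ (itGood G Vs d A').card :=
      itNu_le_erase G Vs d A j hj u
    have hs : 4 * Δ ≤ (Vs j).card := hsize j
    -- 4Δ * N' ≤ |Vs j| * N' ≤ 2 N, so 2Δ * N' ≤ N, so 2Δ * nu ≤ N
    have h4 : 4 * Δ * (itGood G Vs d A').card ≤ 2 * (itGood G Vs d A).card :=
      le_trans (Nat.mul_le_mul_right _ hs) hstep
    have h5 : 2 * Δ * (itGood G Vs d A').card ≤ (itGood G Vs d A).card := by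
      have h4' : 2 * (2 * Δ * (itGood G Vs d A').card)
          ≤ 2 * (itGood G Vs d A).card := by
        calc 2 * (2 * Δ * (itGood G Vs d A').card)
            = 4 * Δ * (itGood G Vs d A').card := by ring
          _ ≤ 2 * (itGood G Vs d A).card := h4
      exact Nat.le_of_mul_le_mul_left h4' (by norm_num)
    calc 2 * Δ * itNu G Vs d A j u ≤ 2 * Δ * (itGood G Vs d A').card :=
        Nat.mul_le_mul_left _ hnu
      _ ≤ (itGood G Vs d A).card := h5

lemma itGood_card_pos (hdisj : ∀ i j, i ≠ j → Disjoint (Vs i) (Vs j))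
    (Δ : ℕ) (hΔpos : 1 ≤ Δ) (hΔ : G.maxDegree ≤ Δ)
    (hsize : ∀ i, 4 * Δ ≤ (Vs i).card) (hd : ∀ i, d i ∈ Vs i) :
    ∀ A : Finset (Fin n), 0 < (itGood G Vs d A).card := by
  intro A
  refine Finset.induction_on A ?_ ?_
  · apply Finset.card_pos.mpr
    refine ⟨d, ?_⟩
    rw [mem_itGood]
    constructor
    · intro i
      exact ⟨fun h => absurd h (Finset.notMem_empty i), fun _ => rfl⟩
    · intro i hi
      exact absurd hi (Finset.notMem_empty i)
  · intro j B hjB ihB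
    have hstep := itGood_step G Vs d hdisj Δ hΔpos hΔ B j hjB
      (fun i hi u => itNu_main G Vs d hdisj Δ hΔpos hΔ hsize B.card B rfl i hi u)
    have hs : 0 < (Vs j).card := by
      have := hsize j
      omega
    have hmul : 0 < (Vs j).card * (itGood G Vs d B).card := Nat.mul_pos hs ihB
    omega

end IndepTransversalAux

theorem independent_transversal {V : Type*} [Fintype V] [DecidableEq V]
    (G : SimpleGraph V) [DecidableRel G.Adj]
    (Δ : ℕ) (hΔpos : 1 ≤ Δ) (hΔ : G.maxDegree ≤ Δ)
    (n : ℕ) (Vs : Fin n → Finset V)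
    (hdisj : ∀ i j, i ≠ j → Disjoint (Vs i) (Vs j))
    (hcover : ∀ v : V, ∃ i, v ∈ Vs i)
    (hsize : ∀ i, 4 * Δ ≤ (Vs i).card) :
    ∃ W : Finset V, W.card = n ∧ (∀ i, (W ∩ Vs i).card = 1) ∧
      (∀ a ∈ W, ∀ b ∈ W, ¬ G.Adj a b) := by
  -- choose default representatives
  have hne : ∀ i, ∃ x, x ∈ Vs i := by
    intro i
    have := hsize i
    have : 0 < (Vs i).card := by omega
    exact Finset.card_pos.mp this
  choose d hd using hne
  -- a good total assignment exists
  have hpos := itGood_card_pos G Vs d hdisj Δ hΔpos hΔ hsize hd Finset.univ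
  obtain ⟨ω, hω⟩ := Finset.card_pos.mp hpos
  rw [mem_itGood] at hω
  obtain ⟨hmem, hind⟩ := hω
  have hVsω : ∀ i, ω i ∈ Vs i := fun i => (hmem i).1 (Finset.mem_univ i)
  have hindω : ∀ i j : Fin n, i ≠ j → ¬ G.Adj (ω i) (ω j) := fun i j hij =>
    hind i (Finset.mem_univ i) j (Finset.mem_univ j) hij
  have hωinj : Function.Injective ω := by
    intro i j hij
    by_contra hne'
    have h1 : ω i ∈ Vs i := hVsω i
    have h2 : ω i ∈ Vs j := hij ▸ hVsω j
    exact (Finset.disjoint_left.mp (hdisj i j hne')) h1 h2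
  refine ⟨Finset.univ.image ω, ?_, ?_, ?_⟩
  · rw [Finset.card_image_of_injective _ hωinj, Finset.card_univ, Fintype.card_fin]
  · intro i
    have : Finset.univ.image ω ∩ Vs i = {ω i} := by
      ext x
      rw [Finset.mem_inter, Finset.mem_image, Finset.mem_singleton]
      constructor
      · rintro ⟨⟨j, _, rfl⟩, hx⟩
        by_cases hij : j = i
        · subst hij; rfl
        · exact absurd hx (Finset.disjoint_left.mp (hdisj j i hij) (hVsω j))
      · rintro rfl
        exact ⟨⟨i, Finset.mem_univ i, rfl⟩, hVsω i⟩
    rw [this, Finset.card_singleton]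
  · intro a ha b hb
    rw [Finset.mem_image] at ha hb
    obtain ⟨i, _, rfl⟩ := ha
    obtain ⟨j, _, rfl⟩ := hb
    by_cases hij : i = j
    · subst hij; exact G.irrefl
    · exact hindω i j hij
end

section
/- Let A be an n×n matrix with integer entries such that no integer appears in more than k entries of A, where k ≤ 27(n-1)/256. Then A has a Latin transversal, i.e., there exists a permutation σ of {1,…,n} such that the entries a_{1σ(1)}, …, a_{nσ(n)} are pairwise distinct. -/
open Finset
open scoped Classical BigOperators

namespace LatinAux

variable {n : ℕ}

abbrev Cell (n : ℕ) := Fin n × Fin n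
abbrev Ev (n : ℕ) := Cell n × Cell n
abbrev Line (n : ℕ) := Sum (Fin n) (Fin n)

def elines (e : Ev n) : Finset (Line n) :=
  {Sum.inl e.1.1, Sum.inl e.2.1, Sum.inr e.1.2, Sum.inr e.2.2}

def Bad (A : Fin n → Fin n → ℤ) (e : Ev n) : Prop :=
  e.1.1 < e.2.1 ∧ e.1.2 ≠ e.2.2 ∧ A e.1.1 e.1.2 = A e.2.1 e.2.2

noncomputable def EE (A : Fin n → Fin n → ℤ) (L : Finset (Line n)) : Finset (Ev n) :=
  univ.filter (fun e => Bad A e ∧ ∀ ℓ ∈ L, ℓ ∉ elines e)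

def Hits (σ : Equiv.Perm (Fin n)) (e : Ev n) : Prop :=
  σ e.1.1 = e.1.2 ∧ σ e.2.1 = e.2.2

noncomputable def Av (S : Finset (Ev n)) : Finset (Equiv.Perm (Fin n)) :=
  univ.filter (fun σ => ∀ e ∈ S, ¬ Hits σ e)

noncomputable def Nn (S : Finset (Ev n)) : ℕ := (Av S).card

noncomputable def Ht (e : Ev n) (S : Finset (Ev n)) : ℕ :=
  ((Av S).filter (fun σ => Hits σ e)).card

lemma Av_anti {S T : Finset (Ev n)} (h : S ⊆ T) : Av T ⊆ Av S := by
  intro σ hσ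
  rw [Av, mem_filter] at hσ ⊢
  exact ⟨hσ.1, fun e he => hσ.2 e (h he)⟩

lemma EE_anti (A : Fin n → Fin n → ℤ) {L L' : Finset (Line n)} (h : L ⊆ L') :
    EE A L' ⊆ EE A L := by
  intro e he
  rw [EE, mem_filter] at he ⊢
  exact ⟨he.1, he.2.1, fun ℓ hℓ => he.2.2 ℓ (h hℓ)⟩

lemma Ht_anti (e : Ev n) {S T : Finset (Ev n)} (h : S ⊆ T) : Ht e T ≤ Ht e S := by
  apply Finset.card_le_card
  exact Finset.filter_subset_filter _ (Av_anti h)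

lemma chain {S T : Finset (Ev n)} (_hST : S ⊆ T) :
    Nn S ≤ Nn T + ∑ e ∈ T \ S, Ht e S := by
  have hsub : Av S ⊆ Av T ∪ (T \ S).biUnion (fun e => (Av S).filter (fun σ => Hits σ e)) := by
    intro σ hσ
    by_cases h : ∀ e ∈ T, ¬ Hits σ e
    · exact Finset.mem_union_left _ (by rw [Av, mem_filter]; exact ⟨mem_univ _, h⟩)
    · push_neg at h
      obtain ⟨e, heT, he⟩ := h
      have heS : e ∉ S := by
        intro h'
        rw [Av, mem_filter] at hσ
        exact hσ.2 e h' he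
      exact Finset.mem_union_right _ (Finset.mem_biUnion.mpr
        ⟨e, Finset.mem_sdiff.mpr ⟨heT, heS⟩, Finset.mem_filter.mpr ⟨hσ, he⟩⟩)
  calc Nn S ≤ (Av T ∪ (T \ S).biUnion (fun e => (Av S).filter (fun σ => Hits σ e))).card :=
        Finset.card_le_card hsub
    _ ≤ Nn T + ((T \ S).biUnion (fun e => (Av S).filter (fun σ => Hits σ e))).card :=
        Finset.card_union_le _ _
    _ ≤ Nn T + ∑ e ∈ T \ S, Ht e S :=
        Nat.add_le_add_left (Finset.card_biUnion_le) _

def colPerm (c c' d d' : Fin n) : Equiv.Perm (Fin n) :=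
  (Equiv.swap c d).trans
    (if Equiv.swap c d c' = d' then Equiv.refl _ else Equiv.swap (Equiv.swap c d c') d')

lemma colPerm_apply_c {c c' d d' : Fin n} (hcc' : c ≠ c') (hdd' : d ≠ d') :
    colPerm c c' d d' c = d := by
  rw [colPerm, Equiv.trans_apply, Equiv.swap_apply_left]
  split_ifs with h
  · rfl
  · refine Equiv.swap_apply_of_ne_of_ne ?_ hdd'
    intro hda
    have h2 : Equiv.swap c d c = Equiv.swap c d c' := by
      rw [Equiv.swap_apply_left]; exact hda
    exact hcc' ((Equiv.swap c d).injective h2)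

lemma colPerm_apply_c' {c c' d d' : Fin n} : colPerm c c' d d' c' = d' := by
  rw [colPerm, Equiv.trans_apply]
  split_ifs with h
  · exact h
  · exact Equiv.swap_apply_left _ _

lemma colPerm_apply_of_ne {c c' d d' b : Fin n}
    (h1 : b ≠ c) (h2 : b ≠ c') (h3 : b ≠ d) (h4 : b ≠ d') :
    colPerm c c' d d' b = b := by
  rw [colPerm, Equiv.trans_apply]
  have hb : Equiv.swap c d b = b := Equiv.swap_apply_of_ne_of_ne h1 h3
  rw [hb]
  split_ifs with h
  · rfl
  · refine Equiv.swap_apply_of_ne_of_ne ?_ h4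
    intro hb'
    apply h2
    have hx : Equiv.swap c d b = Equiv.swap c d c' := by rw [hb]; exact hb'
    exact (Equiv.swap c d).injective hx

lemma swap_bound (S : Finset (Ev n)) (e : Ev n)
    (hr : e.1.1 ≠ e.2.1) (hc : e.1.2 ≠ e.2.2)
    (hS : ∀ f ∈ S, ∀ ℓ ∈ elines e, ℓ ∉ elines f) :
    n * (n - 1) * Ht e S ≤ Nn S := by
  obtain ⟨⟨i, c⟩, j, c'⟩ := e
  simp only at hr hc
  have key : ∀ (σ : Equiv.Perm (Fin n)) (d d' : Fin n), d ≠ d' →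
      σ ∈ Av S → σ i = c → σ j = c' →
      σ.trans (colPerm c c' d d') ∈ Av S := by
    intro σ d d' hdd' hσAv hits1 hits2
    rw [Av, mem_filter] at hσAv ⊢
    refine ⟨mem_univ _, ?_⟩
    intro f hf hHits
    obtain ⟨hf1, hf2⟩ := hHits
    have hTf := hS f hf
    have hfr1 : f.1.1 ≠ i := by
      intro h; exact hTf (Sum.inl i) (by simp [elines]) (by simp [elines, h])
    have hfr2 : f.1.1 ≠ j := by
      intro h; exact hTf (Sum.inl j) (by simp [elines]) (by simp [elines, h])
    have hfr3 : f.2.1 ≠ i := by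
      intro h; exact hTf (Sum.inl i) (by simp [elines]) (by simp [elines, h])
    have hfr4 : f.2.1 ≠ j := by
      intro h; exact hTf (Sum.inl j) (by simp [elines]) (by simp [elines, h])
    have hfc1 : f.1.2 ≠ c := by
      intro h; exact hTf (Sum.inr c) (by simp [elines]) (by simp [elines, h])
    have hfc2 : f.1.2 ≠ c' := by
      intro h; exact hTf (Sum.inr c') (by simp [elines]) (by simp [elines, h])
    have hfc3 : f.2.2 ≠ c := by
      intro h; exact hTf (Sum.inr c) (by simp [elines]) (by simp [elines, h])
    have hfc4 : f.2.2 ≠ c' := by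
      intro h; exact hTf (Sum.inr c') (by simp [elines]) (by simp [elines, h])
    have sub : ∀ a b : Fin n, a ≠ i → a ≠ j → b ≠ c → b ≠ c' →
        (σ.trans (colPerm c c' d d')) a = b → σ a = b := by
      intro a b hai haj hbc hbc' hab
      rw [Equiv.trans_apply] at hab
      by_cases hbd : b = d
      · have hσa : σ a = c :=
          (colPerm c c' d d').injective (hab.trans (hbd.trans (colPerm_apply_c hc hdd').symm))
        exact absurd (σ.injective (hσa.trans hits1.symm)) hai
      · by_cases hbd' : b = d'
        · have hσa : σ a = c' :=
            (colPerm c c' d d').injective (hab.trans (hbd'.trans colPerm_apply_c'.symm))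
          exact absurd (σ.injective (hσa.trans hits2.symm)) haj
        · have hfix : colPerm c c' d d' b = b := colPerm_apply_of_ne hbc hbc' hbd hbd'
          exact (colPerm c c' d d').injective (hab.trans hfix.symm)
    exact hσAv.2 f hf ⟨sub _ _ hfr1 hfr2 hfc1 hfc2 hf1, sub _ _ hfr3 hfr4 hfc3 hfc4 hf2⟩
  -- now the injection counting
  set P := (Av S).filter (fun σ => Hits σ ((i, c), (j, c'))) with hP
  have hmaps : ∀ q ∈ P ×ˢ (univ : Finset (Fin n)).offDiag,
      (fun q : Equiv.Perm (Fin n) × (Fin n × Fin n) =>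
        q.1.trans (colPerm c c' q.2.1 q.2.2)) q ∈ Av S := by
    rintro ⟨σ, d, d'⟩ hq
    rw [mem_product] at hq
    obtain ⟨hσP, hdd⟩ := hq
    rw [Finset.mem_offDiag] at hdd
    rw [hP, mem_filter] at hσP
    obtain ⟨hσAv, hhits⟩ := hσP
    exact key σ d d' hdd.2.2 hσAv hhits.1 hhits.2
  have hinj : Set.InjOn (fun q : Equiv.Perm (Fin n) × (Fin n × Fin n) =>
      q.1.trans (colPerm c c' q.2.1 q.2.2))
      ((P ×ˢ (univ : Finset (Fin n)).offDiag : Finset _) : Set _) := by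
    rintro ⟨σ1, d1, d1'⟩ hq1 ⟨σ2, d2, d2'⟩ hq2 heq
    rw [Finset.mem_coe, mem_product] at hq1 hq2
    obtain ⟨hσ1P, hdd1⟩ := hq1
    obtain ⟨hσ2P, hdd2⟩ := hq2
    rw [Finset.mem_offDiag] at hdd1 hdd2
    rw [hP, mem_filter] at hσ1P hσ2P
    obtain ⟨h1a, h1b⟩ : σ1 i = c ∧ σ1 j = c' := hσ1P.2
    obtain ⟨h2a, h2b⟩ : σ2 i = c ∧ σ2 j = c' := hσ2P.2
    dsimp only at heq
    have hd1 : d1 = d2 := by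
      have h := congrArg (fun g : Equiv.Perm (Fin n) => g i) heq
      simp only [Equiv.trans_apply] at h
      rwa [h1a, h2a, colPerm_apply_c hc hdd1.2.2, colPerm_apply_c hc hdd2.2.2] at h
    have hd2 : d1' = d2' := by
      have h := congrArg (fun g : Equiv.Perm (Fin n) => g j) heq
      simp only [Equiv.trans_apply] at h
      rwa [h1b, h2b, colPerm_apply_c', colPerm_apply_c'] at h
    subst hd1
    subst hd2
    have hσ : σ1 = σ2 := by
      apply Equiv.ext
      intro x
      have h := congrArg (fun g : Equiv.Perm (Fin n) => g x) heq
      simp only [Equiv.trans_apply] at h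
      exact (colPerm c c' d1 d1').injective h
    rw [hσ]
  have hcard := Finset.card_le_card_of_injOn _ hmaps hinj
  rw [Finset.card_product, Finset.offDiag_card, Finset.card_univ, Fintype.card_fin] at hcard
  have hnn : n * (n - 1) = n * n - n := by
    cases n with
    | zero => simp
    | succ m => rw [Nat.succ_sub_one, Nat.mul_succ, Nat.add_sub_cancel]
  have hHt : Ht ((i,c),(j,c')) S = P.card := rfl
  rw [hHt, hnn, Nn, mul_comm]
  exact hcard

def pt : Line n → Fin n → Cell n
  | Sum.inl i, t => (i, t)
  | Sum.inr c, t => (t, c)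

lemma count_line (A : Fin n → Fin n → ℤ) (k : ℕ)
    (hmult : ∀ z : ℤ, ((univ : Finset (Cell n)).filter (fun q => A q.1 q.2 = z)).card ≤ k)
    (ℓ : Line n) :
    ((univ : Finset (Ev n)).filter (fun e => Bad A e ∧ ℓ ∈ elines e)).card ≤ n * k := by
  classical
  set T : Finset (Cell n × Cell n) := univ.biUnion (fun t : Fin n =>
    ({pt ℓ t} : Finset (Cell n)) ×ˢ
      (univ.filter (fun w : Cell n => A w.1 w.2 = A (pt ℓ t).1 (pt ℓ t).2))) with hT
  have hTcard : T.card ≤ n * k := by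
    refine le_trans (Finset.card_biUnion_le) ?_
    have hstep : ∀ t : Fin n,
        (({pt ℓ t} : Finset (Cell n)) ×ˢ
          (univ.filter (fun w : Cell n => A w.1 w.2 = A (pt ℓ t).1 (pt ℓ t).2))).card ≤ k := by
      intro t
      rw [Finset.card_product, Finset.card_singleton, one_mul]
      exact hmult _
    calc ∑ t : Fin n, (({pt ℓ t} : Finset (Cell n)) ×ˢ
          (univ.filter (fun w : Cell n => A w.1 w.2 = A (pt ℓ t).1 (pt ℓ t).2))).card
        ≤ ∑ _t : Fin n, k := Finset.sum_le_sum (fun t _ => hstep t)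
      _ = n * k := by simp [Finset.sum_const, Finset.card_univ, mul_comm]
  have hpt : ∀ w : Cell n, (ℓ = Sum.inl w.1 ∨ ℓ = Sum.inr w.2) → ∃ t, pt ℓ t = w := by
    rintro ⟨a, b⟩ (rfl | rfl)
    · exact ⟨b, rfl⟩
    · exact ⟨a, rfl⟩
  have hmaps : ∀ e ∈ (univ : Finset (Ev n)).filter (fun e => Bad A e ∧ ℓ ∈ elines e),
      (if ℓ = Sum.inl e.1.1 ∨ ℓ = Sum.inr e.1.2 then (e.1, e.2) else (e.2, e.1)) ∈ T := by
    intro e he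
    rw [mem_filter] at he
    obtain ⟨_, hb, hℓ⟩ := he
    have hℓ' : ℓ = Sum.inl e.1.1 ∨ ℓ = Sum.inl e.2.1 ∨ ℓ = Sum.inr e.1.2 ∨ ℓ = Sum.inr e.2.2 := by
      simpa [elines] using hℓ
    split_ifs with h1
    · obtain ⟨t, ht⟩ := hpt e.1 h1
      rw [hT]
      refine Finset.mem_biUnion.mpr ⟨t, mem_univ _, Finset.mem_product.mpr ⟨?_, ?_⟩⟩
      · simp [ht]
      · rw [ht]
        exact Finset.mem_filter.mpr ⟨mem_univ _, hb.2.2.symm⟩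
    · have h2 : ℓ = Sum.inl e.2.1 ∨ ℓ = Sum.inr e.2.2 := by tauto
      obtain ⟨t, ht⟩ := hpt e.2 h2
      rw [hT]
      refine Finset.mem_biUnion.mpr ⟨t, mem_univ _, Finset.mem_product.mpr ⟨?_, ?_⟩⟩
      · simp [ht]
      · rw [ht]
        exact Finset.mem_filter.mpr ⟨mem_univ _, hb.2.2⟩
  have hinj : Set.InjOn (fun e : Ev n =>
      if ℓ = Sum.inl e.1.1 ∨ ℓ = Sum.inr e.1.2 then (e.1, e.2) else (e.2, e.1))
      (((univ : Finset (Ev n)).filter (fun e => Bad A e ∧ ℓ ∈ elines e) : Finset _) : Set _) := by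
    intro e1 he1 e2 he2 heq
    rw [Finset.mem_coe, mem_filter] at he1 he2
    have hb1 := he1.2.1
    have hb2 := he2.2.1
    dsimp only at heq
    split_ifs at heq with h1 h2 h2
    · rw [Prod.mk.injEq] at heq
      exact Prod.ext heq.1 heq.2
    · rw [Prod.mk.injEq] at heq
      exfalso
      have hlt1 : e1.1.1 < e1.2.1 := hb1.1
      have hlt2 : e2.1.1 < e2.2.1 := hb2.1
      rw [heq.1, heq.2] at hlt1
      exact absurd (hlt1.trans hlt2) (lt_irrefl _)
    · rw [Prod.mk.injEq] at heq
      exfalso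
      have hlt1 : e1.1.1 < e1.2.1 := hb1.1
      have hlt2 : e2.1.1 < e2.2.1 := hb2.1
      rw [← heq.1, ← heq.2] at hlt2
      exact absurd (hlt2.trans hlt1) (lt_irrefl _)
    · rw [Prod.mk.injEq] at heq
      exact Prod.ext heq.2 heq.1
  exact le_trans (Finset.card_le_card_of_injOn _ hmaps hinj) hTcard

lemma pad {c X Y : ℕ} (hc : c ≤ 3) (h : 3 ^ c * X ≤ 4 ^ c * Y) : 27 * X ≤ 64 * Y := by
  interval_cases c <;> norm_num at h <;> omega

lemma arith (a b x X N NL : ℕ) (ha : 0 < a)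
    (h256 : 256 * b ≤ 27 * a)
    (h1 : NL ≤ N + X)
    (h2 : 27 * a * X ≤ b * (64 * NL))
    (h3 : 27 * a * x ≤ 64 * NL) :
    3 * b * x ≤ N := by
  have q2 : 256 * (b * NL) ≤ 27 * (a * NL) := by
    calc 256 * (b * NL) = (256 * b) * NL := by ring
      _ ≤ (27 * a) * NL := Nat.mul_le_mul_right _ h256
      _ = 27 * (a * NL) := by ring
  have q3 : 27 * (a * NL) ≤ 27 * (a * N) + 27 * (a * X) := by
    calc 27 * (a * NL) = 27 * a * NL := by ring
      _ ≤ 27 * a * (N + X) := Nat.mul_le_mul_left _ h1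
      _ = 27 * (a * N) + 27 * (a * X) := by ring
  have q1 : 27 * (a * X) ≤ 64 * (b * NL) := by
    calc 27 * (a * X) = 27 * a * X := by ring
      _ ≤ b * (64 * NL) := h2
      _ = 64 * (b * NL) := by ring
  have q5 : 3 * (a * X) ≤ a * N := by
    have h' : 108 * (a * X) ≤ 27 * (a * N) + 27 * (a * X) := by
      calc 108 * (a * X) = 4 * (27 * (a * X)) := by ring
        _ ≤ 4 * (64 * (b * NL)) := Nat.mul_le_mul_left _ q1
        _ = 256 * (b * NL) := by ring
        _ ≤ 27 * (a * NL) := q2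
        _ ≤ 27 * (a * N) + 27 * (a * X) := q3
    have h'' : 27 * (3 * (a * X)) ≤ 27 * (a * N) := by
      have : 81 * (a * X) ≤ 27 * (a * N) := by omega
      calc 27 * (3 * (a * X)) = 81 * (a * X) := by ring
        _ ≤ 27 * (a * N) := this
    exact Nat.le_of_mul_le_mul_left h'' (by norm_num)
  have q6 : 3 * X ≤ N := by
    have h' : a * (3 * X) ≤ a * N := by
      calc a * (3 * X) = 3 * (a * X) := by ring
        _ ≤ a * N := q5
    exact Nat.le_of_mul_le_mul_left h' ha
  have q7 : 81 * (a * x) ≤ 256 * N := by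
    have h3' : 27 * (a * x) ≤ 64 * N + 64 * X := by
      calc 27 * (a * x) = 27 * a * x := by ring
        _ ≤ 64 * NL := h3
        _ ≤ 64 * (N + X) := Nat.mul_le_mul_left _ h1
        _ = 64 * N + 64 * X := by ring
    omega
  have q8 : 256 * (b * x) ≤ 27 * (a * x) := by
    calc 256 * (b * x) = (256 * b) * x := by ring
      _ ≤ (27 * a) * x := Nat.mul_le_mul_right _ h256
      _ = 27 * (a * x) := by ring
  have q9 : 256 * (3 * (b * x)) ≤ 256 * N := by omega
  have q10 : 3 * (b * x) ≤ N := Nat.le_of_mul_le_mul_left q9 (by norm_num)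
  calc 3 * b * x = 3 * (b * x) := by ring
    _ ≤ N := q10

lemma restore (A : Fin n → Fin n → ℤ) (k : ℕ)
    (hmult : ∀ z : ℤ, ((univ : Finset (Cell n)).filter (fun q => A q.1 q.2 = z)).card ≤ k)
    (L₂ : Finset (Line n))
    (hP : ∀ ℓ' e', Bad A e' → ℓ' ∈ elines e' → (∀ x ∈ L₂, x ∉ elines e') →
      3 * (n * k) * Ht e' (EE A (insert ℓ' L₂)) ≤ Nn (EE A L₂))
    (ℓ' : Line n) :
    3 * Nn (EE A (insert ℓ' L₂)) ≤ 4 * Nn (EE A L₂) := by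
  classical
  have hST : EE A (insert ℓ' L₂) ⊆ EE A L₂ := EE_anti A (Finset.subset_insert _ _)
  have hchain := chain hST
  have hmemD : ∀ e' ∈ EE A L₂ \ EE A (insert ℓ' L₂),
      Bad A e' ∧ ℓ' ∈ elines e' ∧ ∀ x ∈ L₂, x ∉ elines e' := by
    intro e' he'
    rw [Finset.mem_sdiff] at he'
    obtain ⟨h1, h2⟩ := he'
    rw [EE, mem_filter] at h1
    obtain ⟨_, hb, hu⟩ := h1
    refine ⟨hb, ?_, hu⟩
    by_contra hℓ
    apply h2
    rw [EE, mem_filter]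
    refine ⟨mem_univ _, hb, ?_⟩
    intro x hx
    rcases Finset.mem_insert.mp hx with rfl | hxL
    · exact hℓ
    · exact hu x hxL
  have hDcard : (EE A L₂ \ EE A (insert ℓ' L₂)).card ≤ n * k := by
    refine le_trans (Finset.card_le_card ?_) (count_line A k hmult ℓ')
    intro e' he'
    have h := hmemD e' he'
    exact mem_filter.mpr ⟨mem_univ _, h.1, h.2.1⟩
  have hsum : 3 * (n * k) * (∑ e' ∈ EE A L₂ \ EE A (insert ℓ' L₂), Ht e' (EE A (insert ℓ' L₂)))
      ≤ (EE A L₂ \ EE A (insert ℓ' L₂)).card * Nn (EE A L₂) := by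
    rw [Finset.mul_sum]
    calc ∑ e' ∈ EE A L₂ \ EE A (insert ℓ' L₂), 3 * (n * k) * Ht e' (EE A (insert ℓ' L₂))
        ≤ ∑ _e' ∈ EE A L₂ \ EE A (insert ℓ' L₂), Nn (EE A L₂) := by
          refine Finset.sum_le_sum ?_
          intro e' he'
          obtain ⟨hb, hℓe, hu⟩ := hmemD e' he'
          exact hP ℓ' e' hb hℓe hu
      _ = (EE A L₂ \ EE A (insert ℓ' L₂)).card * Nn (EE A L₂) := by
          rw [Finset.sum_const, smul_eq_mul]
  by_cases hnk : n * k = 0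
  · have hc0 : (EE A L₂ \ EE A (insert ℓ' L₂)).card = 0 := by omega
    have hDempty : EE A L₂ \ EE A (insert ℓ' L₂) = ∅ := Finset.card_eq_zero.mp hc0
    rw [hDempty, Finset.sum_empty] at hchain
    omega
  · have h1 : (n * k) * (3 * (∑ e' ∈ EE A L₂ \ EE A (insert ℓ' L₂), Ht e' (EE A (insert ℓ' L₂))))
        ≤ (n * k) * Nn (EE A L₂) := by
      calc (n * k) * (3 * (∑ e' ∈ EE A L₂ \ EE A (insert ℓ' L₂), Ht e' (EE A (insert ℓ' L₂))))
          = 3 * (n * k) * (∑ e' ∈ EE A L₂ \ EE A (insert ℓ' L₂), Ht e' (EE A (insert ℓ' L₂))) := by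
            ring
        _ ≤ (EE A L₂ \ EE A (insert ℓ' L₂)).card * Nn (EE A L₂) := hsum
        _ ≤ (n * k) * Nn (EE A L₂) := Nat.mul_le_mul_right _ hDcard
    have h2 : 3 * (∑ e' ∈ EE A L₂ \ EE A (insert ℓ' L₂), Ht e' (EE A (insert ℓ' L₂)))
        ≤ Nn (EE A L₂) := Nat.le_of_mul_le_mul_left h1 (Nat.pos_of_ne_zero hnk)
    omega

lemma memD (A : Fin n → Fin n → ℤ) {L : Finset (Line n)} {ℓ : Line n} {e' : Ev n}
    (he' : e' ∈ EE A L \ EE A (insert ℓ L)) :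
    Bad A e' ∧ ℓ ∈ elines e' ∧ ∀ x ∈ L, x ∉ elines e' := by
  rw [Finset.mem_sdiff] at he'
  obtain ⟨h1, h2⟩ := he'
  rw [EE, mem_filter] at h1
  obtain ⟨_, hb, hu⟩ := h1
  refine ⟨hb, ?_, hu⟩
  by_contra hℓ
  apply h2
  rw [EE, mem_filter]
  refine ⟨mem_univ _, hb, ?_⟩
  intro x hx
  rcases Finset.mem_insert.mp hx with rfl | hxL
  · exact hℓ
  · exact hu x hxL

lemma keyP (A : Fin n → Fin n → ℤ) (k : ℕ)
    (hmult : ∀ z : ℤ, ((univ : Finset (Cell n)).filter (fun q => A q.1 q.2 = z)).card ≤ k)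
    (h256 : 256 * (n * k) ≤ 27 * (n * (n - 1)))
    (ha : 0 < n * (n - 1)) :
    ∀ (j : ℕ) (L : Finset (Line n)), Fintype.card (Line n) - L.card ≤ j →
      ∀ ℓ e, Bad A e → ℓ ∈ elines e → (∀ x ∈ L, x ∉ elines e) →
        3 * (n * k) * Ht e (EE A (insert ℓ L)) ≤ Nn (EE A L) := by
  intro j
  induction j with
  | zero =>
    intro L hL ℓ e _hBad hℓe hLe
    have h1 : L.card ≤ Fintype.card (Line n) := Finset.card_le_univ L
    have hLuniv : L = univ := Finset.eq_univ_of_card L (by omega)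
    exact absurd hℓe (hLe ℓ (hLuniv.symm ▸ mem_univ ℓ))
  | succ j IH =>
    intro L hL ℓ e hBad hℓe hLe
    have hℓL : ℓ ∉ L := fun h => hLe ℓ h hℓe
    have hcardins : (insert ℓ L).card = L.card + 1 := Finset.card_insert_of_notMem hℓL
    have hRst : ∀ L₂ : Finset (Line n), Fintype.card (Line n) - L₂.card ≤ j →
        ∀ ℓ', 3 * Nn (EE A (insert ℓ' L₂)) ≤ 4 * Nn (EE A L₂) := by
      intro L₂ hL₂ ℓ'
      exact restore A k hmult L₂ (fun ℓ'' e' hb ht hu => IH L₂ hL₂ ℓ'' e' hb ht hu) ℓ'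
    have hmRst : ∀ F L₀ : Finset (Line n), Fintype.card (Line n) - L₀.card ≤ j →
        3 ^ F.card * Nn (EE A (L₀ ∪ F)) ≤ 4 ^ F.card * Nn (EE A L₀) := by
      intro F
      induction F using Finset.induction_on with
      | empty => intro L₀ _; simp
      | @insert a F' ha' ihF =>
        intro L₀ h₀
        have hcle : L₀.card ≤ (L₀ ∪ F').card := Finset.card_le_card Finset.subset_union_left
        have hb₀ : Fintype.card (Line n) - (L₀ ∪ F').card ≤ j := by omega
        rw [Finset.card_insert_of_notMem ha', Finset.union_insert]
        calc 3 ^ (F'.card + 1) * Nn (EE A (insert a (L₀ ∪ F')))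
            = 3 ^ F'.card * (3 * Nn (EE A (insert a (L₀ ∪ F')))) := by ring
          _ ≤ 3 ^ F'.card * (4 * Nn (EE A (L₀ ∪ F'))) :=
              Nat.mul_le_mul_left _ (hRst (L₀ ∪ F') hb₀ a)
          _ = 4 * (3 ^ F'.card * Nn (EE A (L₀ ∪ F'))) := by ring
          _ ≤ 4 * (4 ^ F'.card * Nn (EE A L₀)) := Nat.mul_le_mul_left _ (ihF L₀ h₀)
          _ = 4 ^ (F'.card + 1) * Nn (EE A L₀) := by ring
    have hkey : ∀ e', Bad A e' → ℓ ∈ elines e' → (∀ x ∈ L, x ∉ elines e') →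
        27 * (n * (n - 1)) * Ht e' (EE A (insert ℓ L)) ≤ 64 * Nn (EE A (insert ℓ L)) := by
      intro e' hb ht _hu
      have hsub1 : insert ℓ L ⊆ L ∪ elines e' := by
        intro x hx
        rcases Finset.mem_insert.mp hx with rfl | hxL
        · exact Finset.mem_union_right _ ht
        · exact Finset.mem_union_left _ hxL
      have h1 : Ht e' (EE A (insert ℓ L)) ≤ Ht e' (EE A (L ∪ elines e')) :=
        Ht_anti e' (EE_anti A hsub1)
      have h2 : n * (n - 1) * Ht e' (EE A (L ∪ elines e')) ≤ Nn (EE A (L ∪ elines e')) := by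
        refine swap_bound _ e' (ne_of_lt hb.1) hb.2.1 ?_
        intro f hf x hx
        rw [EE, mem_filter] at hf
        exact hf.2.2 x (Finset.mem_union_right _ hx)
      have heq : insert ℓ L ∪ (elines e').erase ℓ = L ∪ elines e' := by
        rw [Finset.insert_union, ← Finset.union_insert, Finset.insert_erase ht]
      have hcard4 : (elines e').card ≤ 4 := by
        rw [elines]
        refine le_trans (Finset.card_insert_le _ _) (Nat.succ_le_succ ?_)
        refine le_trans (Finset.card_insert_le _ _) (Nat.succ_le_succ ?_)
        refine le_trans (Finset.card_insert_le _ _) (Nat.succ_le_succ ?_)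
        simp
      have hcard3 : ((elines e').erase ℓ).card ≤ 3 := by
        rw [Finset.card_erase_of_mem ht]; omega
      have h3' := hmRst ((elines e').erase ℓ) (insert ℓ L) (by omega)
      rw [heq] at h3'
      have h3 : 27 * Nn (EE A (L ∪ elines e')) ≤ 64 * Nn (EE A (insert ℓ L)) := pad hcard3 h3'
      calc 27 * (n * (n - 1)) * Ht e' (EE A (insert ℓ L))
          ≤ 27 * (n * (n - 1)) * Ht e' (EE A (L ∪ elines e')) := Nat.mul_le_mul_left _ h1
        _ = 27 * (n * (n - 1) * Ht e' (EE A (L ∪ elines e'))) := by ring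
        _ ≤ 27 * Nn (EE A (L ∪ elines e')) := Nat.mul_le_mul_left _ h2
        _ ≤ 64 * Nn (EE A (insert ℓ L)) := h3
    have hchain := chain (EE_anti A (Finset.subset_insert ℓ L))
    have hDcard : (EE A L \ EE A (insert ℓ L)).card ≤ n * k := by
      refine le_trans (Finset.card_le_card ?_) (count_line A k hmult ℓ)
      intro e' he'
      have h := memD A he'
      exact mem_filter.mpr ⟨mem_univ _, h.1, h.2.1⟩
    have hsumkey : 27 * (n * (n - 1)) *
        (∑ e' ∈ EE A L \ EE A (insert ℓ L), Ht e' (EE A (insert ℓ L)))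
        ≤ (n * k) * (64 * Nn (EE A (insert ℓ L))) := by
      rw [Finset.mul_sum]
      calc ∑ e' ∈ EE A L \ EE A (insert ℓ L),
            27 * (n * (n - 1)) * Ht e' (EE A (insert ℓ L))
          ≤ ∑ _e' ∈ EE A L \ EE A (insert ℓ L), 64 * Nn (EE A (insert ℓ L)) := by
            refine Finset.sum_le_sum ?_
            intro e' he'
            obtain ⟨hb, hℓe', hu⟩ := memD A he'
            exact hkey e' hb hℓe' hu
        _ = (EE A L \ EE A (insert ℓ L)).card * (64 * Nn (EE A (insert ℓ L))) := by
            rw [Finset.sum_const, smul_eq_mul]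
        _ ≤ (n * k) * (64 * Nn (EE A (insert ℓ L))) := Nat.mul_le_mul_right _ hDcard
    exact arith (n * (n - 1)) (n * k) (Ht e (EE A (insert ℓ L)))
      (∑ e' ∈ EE A L \ EE A (insert ℓ L), Ht e' (EE A (insert ℓ L)))
      (Nn (EE A L)) (Nn (EE A (insert ℓ L))) ha h256 hchain hsumkey
      (hkey e hBad hℓe hLe)

lemma exists_good (A : Fin n → Fin n → ℤ) (k : ℕ)
    (hmult : ∀ z : ℤ, ((univ : Finset (Cell n)).filter (fun q => A q.1 q.2 = z)).card ≤ k)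
    (h256 : 256 * (n * k) ≤ 27 * (n * (n - 1)))
    (ha : 0 < n * (n - 1)) :
    0 < Nn (EE A (∅ : Finset (Line n))) := by
  have hPall : ∀ (L : Finset (Line n)) (ℓ' : Line n) (e' : Ev n), Bad A e' → ℓ' ∈ elines e' →
      (∀ x ∈ L, x ∉ elines e') → 3 * (n * k) * Ht e' (EE A (insert ℓ' L)) ≤ Nn (EE A L) :=
    fun L => keyP A k hmult h256 ha (Fintype.card (Line n)) L (Nat.sub_le _ _)
  have hRall : ∀ (L₂ : Finset (Line n)) (ℓ' : Line n),
      3 * Nn (EE A (insert ℓ' L₂)) ≤ 4 * Nn (EE A L₂) :=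
    fun L₂ ℓ' => restore A k hmult L₂ (fun ℓ'' e' hb ht hu => hPall L₂ ℓ'' e' hb ht hu) ℓ'
  have hAll : ∀ F : Finset (Line n),
      3 ^ F.card * Nn (EE A F) ≤ 4 ^ F.card * Nn (EE A (∅ : Finset (Line n))) := by
    intro F
    induction F using Finset.induction_on with
    | empty => simp
    | @insert a F' ha' ihF =>
      rw [Finset.card_insert_of_notMem ha']
      calc 3 ^ (F'.card + 1) * Nn (EE A (insert a F'))
          = 3 ^ F'.card * (3 * Nn (EE A (insert a F'))) := by ring
        _ ≤ 3 ^ F'.card * (4 * Nn (EE A F')) := Nat.mul_le_mul_left _ (hRall F' a)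
        _ = 4 * (3 ^ F'.card * Nn (EE A F')) := by ring
        _ ≤ 4 * (4 ^ F'.card * Nn (EE A (∅ : Finset (Line n)))) := Nat.mul_le_mul_left _ ihF
        _ = 4 ^ (F'.card + 1) * Nn (EE A (∅ : Finset (Line n))) := by ring
  have hEuniv : EE A (univ : Finset (Line n)) = ∅ := by
    ext e
    rw [EE, mem_filter]
    simp only [Finset.notMem_empty, iff_false, not_and]
    intro _ _ hu
    exact hu (Sum.inl e.1.1) (mem_univ _) (by simp [elines])
  have h := hAll univ
  rw [hEuniv] at h
  have hne : (Av (∅ : Finset (Ev n))).Nonempty :=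
    ⟨1, by rw [Av, mem_filter]; exact ⟨mem_univ _, by simp⟩⟩
  have hpos : 0 < Nn (∅ : Finset (Ev n)) := Finset.card_pos.mpr hne
  by_contra h0
  push_neg at h0
  have hz : Nn (EE A (∅ : Finset (Line n))) = 0 := by omega
  rw [hz, mul_zero, Nat.le_zero] at h
  have h3 : 0 < 3 ^ (univ : Finset (Line n)).card := pow_pos (by norm_num) _
  have := Nat.mul_pos h3 hpos
  omega

end LatinAux

open LatinAux

theorem latin_transversal (n k : ℕ) (A : Fin n → Fin n → ℤ)
    (hmult : ∀ z : ℤ,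
      ((Finset.univ : Finset (Fin n × Fin n)).filter (fun q => A q.1 q.2 = z)).card ≤ k)
    (hk : (k : ℝ) ≤ 27 * ((n : ℝ) - 1) / 256) :
    ∃ σ : Equiv.Perm (Fin n), Function.Injective (fun i => A i (σ i)) := by
  by_cases hn : n ≤ 1
  · refine ⟨1, fun i j _ => ?_⟩
    have hi := i.isLt
    have hj := j.isLt
    exact Fin.ext (by omega)
  · push_neg at hn
    have hn2 : 2 ≤ n := hn
    have h256k : 256 * k ≤ 27 * (n - 1) := by
      have h1 : (k : ℝ) * 256 ≤ 27 * ((n : ℝ) - 1) := by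
        rw [le_div_iff₀ (by norm_num : (0:ℝ) < 256)] at hk
        exact hk
      have h2 : ((256 * k : ℕ) : ℝ) ≤ ((27 * (n - 1) : ℕ) : ℝ) := by
        push_cast [Nat.cast_sub (by omega : 1 ≤ n)]
        linarith
      exact_mod_cast h2
    have h256 : 256 * (n * k) ≤ 27 * (n * (n - 1)) := by
      have hmul := Nat.mul_le_mul_left n h256k
      calc 256 * (n * k) = n * (256 * k) := by ring
        _ ≤ n * (27 * (n - 1)) := hmul
        _ = 27 * (n * (n - 1)) := by ring
    have ha : 0 < n * (n - 1) := by
      have h1 : 1 ≤ n - 1 := by omega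
      have h2 : 2 * 1 ≤ n * (n - 1) := Nat.mul_le_mul hn2 h1
      omega
    have hpos := exists_good A k hmult h256 ha
    obtain ⟨σ, hσ⟩ := Finset.card_pos.mp hpos
    rw [Av, mem_filter] at hσ
    have hAvoid := hσ.2
    refine ⟨σ, ?_⟩
    intro i j hij
    dsimp only at hij
    by_contra hne
    have main : ∀ i' j' : Fin n, i' < j' → A i' (σ i') = A j' (σ j') → False := by
      intro i' j' hlt heq
      have hBad : Bad A ((i', σ i'), (j', σ j')) :=
        ⟨hlt, σ.injective.ne (ne_of_lt hlt), heq⟩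
      have hmem : ((i', σ i'), (j', σ j')) ∈ EE A (∅ : Finset (Line n)) := by
        rw [EE, mem_filter]
        exact ⟨mem_univ _, hBad, fun x hx => absurd hx (Finset.notMem_empty x)⟩
      exact hAvoid _ hmem ⟨rfl, rfl⟩
    rcases lt_trichotomy i j with h | h | h
    · exact main i j h hij
    · exact hne h
    · exact main j i h hij.symm
end

section
/- Let F = (U, C) be an instance of k-SAT (every clause contains exactly k distinct variables). If each variable occurs (in positive or negated form) in at most 2^k/(e·k) clauses, then F is satisfiable. -/
open Finset
open scoped Classical BigOperators

section LLLAux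

variable {V : Type*} [Fintype V] [DecidableEq V] {ι : Type*} [Fintype ι]

/-- Assignments satisfying every clause in `S`. -/
noncomputable def llGood (cvars : ι → Finset V) (csign : ι → V → Bool) (S : Finset ι) :
    Finset (V → Bool) :=
  Finset.univ.filter (fun a => ∀ c ∈ S, ∃ v ∈ cvars c, a v = csign c v)

/-- Assignments violating clause `c`. -/
noncomputable def llBad (cvars : ι → Finset V) (csign : ι → V → Bool) (c : ι) :
    Finset (V → Bool) :=
  Finset.univ.filter (fun a => ∀ v ∈ cvars c, a v = !csign c v)

lemma mem_llGood {cvars : ι → Finset V} {csign : ι → V → Bool} {S : Finset ι} {a : V → Bool} :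
    a ∈ llGood cvars csign S ↔ ∀ c ∈ S, ∃ v ∈ cvars c, a v = csign c v := by
  simp [llGood]

lemma mem_llBad {cvars : ι → Finset V} {csign : ι → V → Bool} {c : ι} {a : V → Bool} :
    a ∈ llBad cvars csign c ↔ ∀ v ∈ cvars c, a v = !csign c v := by
  simp [llBad]

lemma llGood_mono {cvars : ι → Finset V} {csign : ι → V → Bool} {S T : Finset ι}
    (h : S ⊆ T) : llGood cvars csign T ⊆ llGood cvars csign S := by
  intro a ha
  rw [mem_llGood] at ha ⊢
  exact fun c hc => ha c (h hc)

lemma llGood_insert {cvars : ι → Finset V} {csign : ι → V → Bool} {S : Finset ι} {c : ι} :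
    llGood cvars csign (insert c S) = llGood cvars csign S \ llBad cvars csign c := by
  ext a
  simp only [mem_llGood, mem_llBad, Finset.mem_sdiff, Finset.mem_insert]
  constructor
  · intro h
    refine ⟨fun j hj => h j (Or.inr hj), ?_⟩
    intro hb
    obtain ⟨v, hv, hav⟩ := h c (Or.inl rfl)
    have := hb v hv
    rw [hav] at this
    exact (Bool.eq_not_self _).mp this
  · rintro ⟨hS, hnb⟩
    intro j hj
    rcases hj with rfl | hj
    · push_neg at hnb
      obtain ⟨v, hv, hav⟩ := hnb
      refine ⟨v, hv, ?_⟩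
      cases h : a v <;> cases h2 : csign j v <;> simp_all
    · exact hS j hj

lemma llGood_insert_card {cvars : ι → Finset V} {csign : ι → V → Bool} {S : Finset ι} {c : ι} :
    ((llGood cvars csign (insert c S)).card : ℝ)
      = (llGood cvars csign S).card - ((llBad cvars csign c ∩ llGood cvars csign S).card : ℝ) := by
  rw [llGood_insert]
  have h := Finset.card_inter_add_card_sdiff (llGood cvars csign S) (llBad cvars csign c)
  have h2 : llGood cvars csign S ∩ llBad cvars csign c
      = llBad cvars csign c ∩ llGood cvars csign S := Finset.inter_comm _ _
  rw [h2] at h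
  have := congrArg (fun n : ℕ => (n : ℝ)) h
  push_cast at this
  linarith

/-- Counting assignments fixed off a set `s`. -/
lemma card_fixed_off (s : Finset V) (b : V → Bool) :
    (Finset.univ.filter (fun a : V → Bool => ∀ v ∉ s, a v = b v)).card = 2 ^ s.card := by
  have : (Finset.univ.filter (fun a : V → Bool => ∀ v ∉ s, a v = b v)).card
      = (Finset.univ : Finset ({v // v ∈ s} → Bool)).card := by
    refine Finset.card_bij' (fun a _ => fun v => a v.1)
      (fun σ _ => fun v => if h : v ∈ s then σ ⟨v, h⟩ else b v) ?_ ?_ ?_ ?_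
    · intro a ha; exact Finset.mem_univ _
    · intro σ hσ
      simp only [Finset.mem_filter, Finset.mem_univ, true_and]
      intro v hv
      simp [hv]
    · intro a ha
      simp only [Finset.mem_filter, Finset.mem_univ, true_and] at ha
      funext v
      by_cases h : v ∈ s
      · simp [h]
      · simp [h, ha v h]
    · intro σ hσ
      funext v
      simp [v.2]
  rw [this, Finset.card_univ, Fintype.card_fun]
  simp [Fintype.card_coe]

/-- Independence: if clause `c` is variable-disjoint from every clause of `S`,
then violating `c` costs exactly a factor `2 ^ k` among the assignments good for `S`. -/
lemma llIndep {cvars : ι → Finset V} {csign : ι → V → Bool} {S : Finset ι} {c : ι} {k : ℕ}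
    (hcard : (cvars c).card = k)
    (hdisj : ∀ j ∈ S, Disjoint (cvars c) (cvars j)) :
    (llGood cvars csign S).card
      = 2 ^ k * (llBad cvars csign c ∩ llGood cvars csign S).card := by
  classical
  set φ : (V → Bool) → (V → Bool) :=
    fun a v => if v ∈ cvars c then !csign c v else a v with hφ
  have hmap : ∀ a ∈ llGood cvars csign S, φ a ∈ llBad cvars csign c ∩ llGood cvars csign S := by
    intro a ha
    rw [mem_llGood] at ha
    rw [Finset.mem_inter, mem_llBad, mem_llGood]
    constructor
    · intro v hv; simp [hφ, hv]
    · intro j hj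
      obtain ⟨v, hv, hav⟩ := ha j hj
      have hvc : v ∉ cvars c := fun h => Finset.disjoint_left.mp (hdisj j hj) h hv
      exact ⟨v, hv, by simp [hφ, hvc, hav]⟩
  rw [Finset.card_eq_sum_card_fiberwise hmap]
  have hfib : ∀ b ∈ llBad cvars csign c ∩ llGood cvars csign S,
      ((llGood cvars csign S).filter (fun a => φ a = b)).card = 2 ^ k := by
    intro b hb
    rw [Finset.mem_inter, mem_llBad, mem_llGood] at hb
    obtain ⟨hbBad, hbGood⟩ := hb
    have : (llGood cvars csign S).filter (fun a => φ a = b)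
        = Finset.univ.filter (fun a : V → Bool => ∀ v ∉ cvars c, a v = b v) := by
      ext a
      simp only [Finset.mem_filter, Finset.mem_univ, true_and, mem_llGood]
      constructor
      · rintro ⟨ha, rfl⟩
        intro v hv
        simp [hφ, hv]
      · intro h
        constructor
        · intro j hj
          obtain ⟨v, hv, hbv⟩ := hbGood j hj
          have hvc : v ∉ cvars c := fun hc => Finset.disjoint_left.mp (hdisj j hj) hc hv
          exact ⟨v, hv, by rw [h v hvc]; exact hbv⟩
        · funext v
          by_cases hv : v ∈ cvars c
          · simp [hφ, hv, hbBad v hv]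
          · simp [hφ, hv, h v hv]
    rw [this, card_fixed_off, hcard]
  rw [Finset.sum_congr rfl hfib, Finset.sum_const, smul_eq_mul, mul_comm]

/-- The key numeric inequality: `(1-x)^r ≥ 1/e` when `r ≤ 1/x - 1`. -/
lemma llNumeric {x : ℝ} (hx0 : 0 < x) (hx1 : x < 1) {r : ℕ} (hr : (r : ℝ) ≤ 1 / x - 1) :
    1 ≤ Real.exp 1 * (1 - x) ^ r := by
  have h1x : 0 < 1 - x := by linarith
  set y : ℝ := x / (1 - x) with hy
  have hy0 : 0 ≤ y := div_nonneg hx0.le h1x.le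
  have hE : 1 ≤ (1 - x) * Real.exp y := by
    have h := Real.add_one_le_exp y
    have h2 := mul_le_mul_of_nonneg_left h h1x.le
    have h3 : (1 - x) * (y + 1) = 1 := by
      rw [hy, mul_add, mul_div_assoc', mul_div_cancel_left₀ x h1x.ne']; ring
    linarith
  have hkey : Real.exp (-y) ≤ 1 - x := by
    rw [Real.exp_neg]
    have hEpos := Real.exp_pos y
    nlinarith [mul_inv_cancel₀ (ne_of_gt hEpos)]
  have hpow : Real.exp (-y) ^ r ≤ (1 - x) ^ r :=
    pow_le_pow_left₀ (Real.exp_nonneg _) hkey r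
  have hexp : Real.exp (-1) ≤ Real.exp (-y) ^ r := by
    rw [← Real.exp_nat_mul]
    apply Real.exp_le_exp.mpr
    have hrx : (r : ℝ) * x ≤ 1 - x := by
      have h1 : (r : ℝ) * x ≤ (1 / x - 1) * x := mul_le_mul_of_nonneg_right hr hx0.le
      have h2 : (1 / x - 1) * x = 1 - x := by field_simp
      linarith
    have hry : (r : ℝ) * y ≤ 1 := by
      rw [hy, ← mul_div_assoc, div_le_one h1x]
      exact hrx
    have : (r : ℝ) * -y = -((r : ℝ) * y) := by ring
    rw [this]
    linarith
  have : Real.exp (-1) ≤ (1 - x) ^ r := le_trans hexp hpow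
  calc (1 : ℝ) = Real.exp 1 * Real.exp (-1) := by
        rw [← Real.exp_add]; norm_num
    _ ≤ Real.exp 1 * (1 - x) ^ r :=
        mul_le_mul_of_nonneg_left this (Real.exp_nonneg _)

end LLLAux

/-- Main Local Lemma induction: conditioned on all clauses of `S` being satisfied,
the proportion of assignments violating `c` is at most `e / 2^k`. -/
lemma llMain {V : Type*} [Fintype V] [DecidableEq V] {ι : Type*} [Fintype ι]
    (k : ℕ) (hk : 1 ≤ k) (cvars : ι → Finset V) (csign : ι → V → Bool)
    (hcard : ∀ c, (cvars c).card = k)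
    (hocc : ∀ v : V,
      (((Finset.univ : Finset ι).filter (fun c => v ∈ cvars c)).card : ℝ)
        ≤ 2 ^ k / (Real.exp 1 * k))
    (hx1 : Real.exp 1 / 2 ^ k < 1) :
    ∀ S : Finset ι, ∀ c : ι,
      ((llBad cvars csign c ∩ llGood cvars csign S).card : ℝ)
        ≤ (Real.exp 1 / 2 ^ k) * (llGood cvars csign S).card := by
  have h2k : (0 : ℝ) < 2 ^ k := by positivity
  set x : ℝ := Real.exp 1 / 2 ^ k with hxdef
  have hx0 : 0 < x := div_pos (Real.exp_pos 1) h2k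
  intro S
  induction S using Finset.strongInduction with
  | _ S ih =>
  intro c
  by_cases hcS : c ∈ S
  · have hempty : llBad cvars csign c ∩ llGood cvars csign S = ∅ := by
      ext a
      simp only [Finset.mem_inter, mem_llBad, mem_llGood, Finset.notMem_empty, iff_false,
        not_and]
      intro hb hg
      obtain ⟨v, hv, hav⟩ := hg c hcS
      have := hb v hv
      rw [hav] at this
      exact (Bool.eq_not_self _).mp this
    rw [hempty]
    simp only [Finset.card_empty, Nat.cast_zero]
    positivity
  · set S₁ := S.filter (fun j => ¬ Disjoint (cvars c) (cvars j)) with hS₁def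
    set S₂ := S.filter (fun j => Disjoint (cvars c) (cvars j)) with hS₂def
    have hunion : S₂ ∪ S₁ = S := Finset.filter_union_filter_not_eq _ S
    have hdisj : ∀ j ∈ S₂, Disjoint (cvars c) (cvars j) := fun j hj =>
      (Finset.mem_filter.mp hj).2
    have hindep := llIndep (csign := csign) (S := S₂) (hcard c) hdisj
    have hmono : (llBad cvars csign c ∩ llGood cvars csign S).card
        ≤ (llBad cvars csign c ∩ llGood cvars csign S₂).card := by
      apply Finset.card_le_card
      exact Finset.inter_subset_inter (Finset.Subset.refl _)
        (llGood_mono (Finset.filter_subset _ _))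
    -- peeling off the neighbouring clauses one at a time
    have hpeel : ∀ T : Finset ι, T ⊆ S₁ →
        (1 - x) ^ T.card * ((llGood cvars csign S₂).card : ℝ)
          ≤ ((llGood cvars csign (S₂ ∪ T)).card : ℝ) := by
      intro T
      induction T using Finset.induction_on with
      | empty => intro _; simp
      | @insert j T hjT ihT =>
        intro hsub
        have hT : T ⊆ S₁ := fun t ht => hsub (Finset.mem_insert_of_mem ht)
        have hjS₁ : j ∈ S₁ := hsub (Finset.mem_insert_self j T)
        have hjS : j ∈ S := Finset.filter_subset _ _ hjS₁
        have hjnm : j ∉ S₂ ∪ T := by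
          intro hmem
          rcases Finset.mem_union.mp hmem with h2 | h2
          · exact (Finset.mem_filter.mp hjS₁).2 (Finset.mem_filter.mp h2).2
          · exact hjT h2
        have hsubS : S₂ ∪ T ⊆ S := by
          intro t ht
          rcases Finset.mem_union.mp ht with h2 | h2
          · exact Finset.filter_subset _ _ h2
          · exact Finset.filter_subset _ _ (hT h2)
        have hssub : S₂ ∪ T ⊂ S :=
          (Finset.ssubset_iff_of_subset hsubS).mpr ⟨j, hjS, hjnm⟩
        have hstep := ih (S₂ ∪ T) hssub j
        have heq : S₂ ∪ insert j T = insert j (S₂ ∪ T) := by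
          rw [Finset.union_insert]
        have hins := llGood_insert_card (cvars := cvars) (csign := csign)
          (S := S₂ ∪ T) (c := j)
        have hx1' : (0 : ℝ) ≤ 1 - x := by linarith
        calc (1 - x) ^ (insert j T).card * ((llGood cvars csign S₂).card : ℝ)
            = (1 - x) * ((1 - x) ^ T.card * ((llGood cvars csign S₂).card : ℝ)) := by
              rw [Finset.card_insert_of_notMem hjT]; ring
          _ ≤ (1 - x) * ((llGood cvars csign (S₂ ∪ T)).card : ℝ) :=
              mul_le_mul_of_nonneg_left (ihT hT) hx1'
          _ ≤ ((llGood cvars csign (S₂ ∪ insert j T)).card : ℝ) := by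
              rw [heq, hins]; nlinarith [hstep]
    -- bound on the number of neighbouring clauses
    have hrbound : ((S₁.card : ℝ)) ≤ 1 / x - 1 := by
      set N := (Finset.univ : Finset ι).filter (fun j => ¬ Disjoint (cvars c) (cvars j))
        with hNdef
      have hcvne : cvars c ≠ ∅ := by
        intro h
        have := hcard c
        rw [h] at this
        simp at this
        omega
      have hcN : c ∈ N := by
        rw [hNdef, Finset.mem_filter]
        exact ⟨Finset.mem_univ _, by simp [disjoint_self, Finset.bot_eq_empty, hcvne]⟩
      have hcS₁ : c ∉ S₁ := fun h => hcS (Finset.filter_subset _ _ h)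
      have hsub1 : insert c S₁ ⊆ N := by
        intro t ht
        rcases Finset.mem_insert.mp ht with rfl | ht
        · exact hcN
        · rw [hNdef, Finset.mem_filter]
          exact ⟨Finset.mem_univ _, (Finset.mem_filter.mp ht).2⟩
      have h1 : S₁.card + 1 ≤ N.card := by
        have := Finset.card_le_card hsub1
        rwa [Finset.card_insert_of_notMem hcS₁] at this
      have hNsub : N ⊆ (cvars c).biUnion
          (fun v => (Finset.univ : Finset ι).filter (fun j => v ∈ cvars j)) := by
        intro j hj
        rw [hNdef, Finset.mem_filter] at hj
        obtain ⟨v, hv1, hv2⟩ := Finset.not_disjoint_iff.mp hj.2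
        exact Finset.mem_biUnion.mpr ⟨v, hv1, Finset.mem_filter.mpr ⟨Finset.mem_univ _, hv2⟩⟩
      have h2 : (N.card : ℝ) ≤ ∑ v ∈ cvars c,
          (((Finset.univ : Finset ι).filter (fun j => v ∈ cvars j)).card : ℝ) := by
        have := le_trans (Finset.card_le_card hNsub) (Finset.card_biUnion_le)
        exact_mod_cast this
      have h3 : ∑ v ∈ cvars c,
          (((Finset.univ : Finset ι).filter (fun j => v ∈ cvars j)).card : ℝ)
          ≤ ∑ _v ∈ cvars c, (2 ^ k / (Real.exp 1 * k) : ℝ) :=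
        Finset.sum_le_sum (fun v _ => hocc v)
      have h4 : ∑ _v ∈ cvars c, (2 ^ k / (Real.exp 1 * k) : ℝ)
          = (2 : ℝ) ^ k / Real.exp 1 := by
        rw [Finset.sum_const, hcard c, nsmul_eq_mul]
        have hkne : (k : ℝ) ≠ 0 := by
          have : (1 : ℝ) ≤ (k : ℝ) := by exact_mod_cast hk
          linarith
        field_simp
      have h5 : (1 : ℝ) / x = 2 ^ k / Real.exp 1 := by
        rw [hxdef, one_div_div]
      have h6 : ((S₁.card : ℝ)) + 1 ≤ (N.card : ℝ) := by exact_mod_cast h1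
      rw [h5]
      linarith
    have hnum := llNumeric hx0 hx1 hrbound
    -- put everything together
    have hindep' : ((llGood cvars csign S₂).card : ℝ)
        = 2 ^ k * ((llBad cvars csign c ∩ llGood cvars csign S₂).card : ℝ) := by
      exact_mod_cast hindep
    have hmono' : ((llBad cvars csign c ∩ llGood cvars csign S).card : ℝ)
        ≤ ((llBad cvars csign c ∩ llGood cvars csign S₂).card : ℝ) := by
      exact_mod_cast hmono
    set g : ℝ := ((llGood cvars csign S).card : ℝ) with hg
    set g₂ : ℝ := ((llGood cvars csign S₂).card : ℝ) with hg₂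
    set b : ℝ := ((llBad cvars csign c ∩ llGood cvars csign S).card : ℝ) with hb
    set b₂ : ℝ := ((llBad cvars csign c ∩ llGood cvars csign S₂).card : ℝ) with hb₂
    have hpeel' : (1 - x) ^ S₁.card * g₂ ≤ g := by
      have := hpeel S₁ (Finset.Subset.refl _)
      rwa [hunion] at this
    have hg₂nn : 0 ≤ g₂ := Nat.cast_nonneg _
    have hgle : g₂ ≤ Real.exp 1 * g := by
      have h7 : g₂ ≤ Real.exp 1 * ((1 - x) ^ S₁.card * g₂) := by
        nlinarith [hnum, hg₂nn]
      have h8 : Real.exp 1 * ((1 - x) ^ S₁.card * g₂) ≤ Real.exp 1 * g :=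
        mul_le_mul_of_nonneg_left hpeel' (Real.exp_nonneg 1)
      linarith
    have hb₂' : b₂ = g₂ / 2 ^ k := by
      rw [hindep']
      field_simp
    calc b ≤ b₂ := hmono'
      _ = g₂ / 2 ^ k := hb₂'
      _ ≤ (Real.exp 1 * g) / 2 ^ k := by
          exact div_le_div_of_nonneg_right hgle h2k.le
      _ = x * g := by rw [hxdef]; ring

/-- Positivity of the number of good assignments. -/
lemma llPos {V : Type*} [Fintype V] [DecidableEq V] {ι : Type*} [Fintype ι]
    (k : ℕ) (hk : 1 ≤ k) (cvars : ι → Finset V) (csign : ι → V → Bool)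
    (hcard : ∀ c, (cvars c).card = k)
    (hocc : ∀ v : V,
      (((Finset.univ : Finset ι).filter (fun c => v ∈ cvars c)).card : ℝ)
        ≤ 2 ^ k / (Real.exp 1 * k))
    (hx1 : Real.exp 1 / 2 ^ k < 1) :
    ∀ S : Finset ι, (0 : ℝ) < ((llGood cvars csign S).card : ℝ) := by
  intro S
  induction S using Finset.induction_on with
  | empty =>
    have : llGood cvars csign (∅ : Finset ι) = Finset.univ := by
      ext a; simp [mem_llGood]
    rw [this, Finset.card_univ]
    exact_mod_cast Fintype.card_pos
  | @insert c S hcS ihS =>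
    rw [llGood_insert_card]
    have hmain := llMain k hk cvars csign hcard hocc hx1 S c
    nlinarith [hmain, ihS, hx1]

/-- A k-SAT instance: clauses indexed by a finite type `ι`, each clause `c`
consisting of a set `cvars c` of exactly `k` distinct variables, each occurring
with sign `csign c v` (the literal is `v` if `csign c v = true`, `¬v` otherwise).
An assignment `a` satisfies clause `c` iff some variable in it gets its sign. -/
theorem ksat_satisfiable {V : Type*} [Fintype V] [DecidableEq V]
    {ι : Type*} [Fintype ι]
    (k : ℕ) (hk : 1 ≤ k)
    (cvars : ι → Finset V) (csign : ι → V → Bool)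
    (hcard : ∀ c, (cvars c).card = k)
    (hocc : ∀ v : V,
      (((Finset.univ : Finset ι).filter (fun c => v ∈ cvars c)).card : ℝ)
        ≤ 2 ^ k / (Real.exp 1 * k)) :
    ∃ a : V → Bool, ∀ c : ι, ∃ v ∈ cvars c, a v = csign c v := by
  by_cases hι : Nonempty ι
  · obtain ⟨c₀⟩ := hι
    have hcv : (cvars c₀).Nonempty := by
      rw [← Finset.card_pos, hcard]; omega
    obtain ⟨v, hv⟩ := hcv
    have h1 : (1 : ℝ) ≤ (((Finset.univ : Finset ι).filter (fun c => v ∈ cvars c)).card : ℝ) := by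
      have : 0 < ((Finset.univ : Finset ι).filter (fun c => v ∈ cvars c)).card :=
        Finset.card_pos.mpr ⟨c₀, Finset.mem_filter.mpr ⟨Finset.mem_univ _, hv⟩⟩
      exact_mod_cast this
    have hek0 : (0 : ℝ) < Real.exp 1 * k := by
      have : (0 : ℝ) < (k : ℝ) := by exact_mod_cast hk
      positivity
    have hek : Real.exp 1 * k ≤ 2 ^ k := by
      have h2 := le_trans h1 (hocc v)
      rw [le_div_iff₀ hek0] at h2
      linarith
    have hk2 : 2 ≤ k := by
      by_contra h
      have hk1 : k = 1 := by omega
      subst hk1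
      norm_num at hek
      linarith [Real.exp_one_gt_d9]
    have hx1 : Real.exp 1 / 2 ^ k < 1 := by
      rw [div_lt_one (by positivity : (0:ℝ) < 2 ^ k)]
      have hklt : (1 : ℝ) < (k : ℝ) := by exact_mod_cast hk2
      have := Real.exp_pos 1
      nlinarith
    have hpos := llPos k hk cvars csign hcard hocc hx1 (Finset.univ : Finset ι)
    have hne : (llGood cvars csign (Finset.univ : Finset ι)).Nonempty := by
      rw [← Finset.card_pos]
      exact_mod_cast hpos
    obtain ⟨a, ha⟩ := hne
    exact ⟨a, fun c => mem_llGood.mp ha c (Finset.mem_univ c)⟩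
  · exact ⟨fun _ => true, fun c => absurd ⟨c⟩ hι⟩
end
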